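/- arXiv:2309.13597 — 4 statements merged into one kernel-verified Lean document; each statement's English description precedes it below -/
import Mathlib

section
/- Suppose B̄ satisfies Assumptions (B1) and (B2), and for 0 ≤ s ≤ t ≤ T let S_{s,t}(ψ) denote the unique solution in H of the Volterra fixed-point equation E(s,t,ψ). Then for every 0 ≤ s ≤ t ≤ T the map S_{s,t} : H → H is Fréchet differentiable at every point; for every ψ, η ∈ H, the derivative DS_{s,t}(ψ)η is the unique v ∈ H with v(ξ) = η(ξ) + ∫ₛᵗ (DB̄(S_{s,t}(ψ))v)(r,ξ) dr for a.e. ξ ∈ (0,T); and there exists a constant C₂ > 0 depending only on C₀ and T such that for all ψ, ψ₁, ψ₂, η ∈ H: ‖DS_{s,t}(ψ)η‖₂ ≤ C₂‖η‖₂ and ‖DS_{s,t}(ψ₁)η − DS_{s,t}(ψ₂)η‖₂ ≤ C₂‖S_{s,t}(ψ₁) − S_{s,t}(ψ₂)‖₂^γ · ‖η‖₂. In particular, ψ ↦ DS_{s,t}(ψ) is γ-Hölder continuous from H to ℒ(H;H). -/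
open MeasureTheory

noncomputable section

/-- Lebesgue measure restricted to `(0,T)`. -/
abbrev fracMeas (T : ℝ) : Measure ℝ := volume.restrict (Set.Ioo 0 T)

/-- The Hilbert space `H = L²((0,T); ℝ^d)`. -/
abbrev HSp (d : ℕ) (T : ℝ) := Lp (EuclideanSpace ℝ (Fin d)) 2 (fracMeas T)

/-- The space `H_⊗ = L²((0,T)×(0,T); ℝ^d)`. -/
abbrev HTen (d : ℕ) (T : ℝ) :=
  Lp (EuclideanSpace ℝ (Fin d)) 2 ((fracMeas T).prod (fracMeas T))

/-- **Assumption (B1)**: growth, Lipschitz continuity, the Volterra property and causality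
of the extended drift `B̄ : H → H_⊗`. -/
structure AssumptionB1 (d : ℕ) (T : ℝ) (B : HSp d T → HTen d T) (C₀ : ℝ) : Prop where
  growth : ∀ w : HSp d T, ‖B w‖ ≤ C₀ * (1 + ‖w‖)
  lipschitz : ∀ w₁ w₂ : HSp d T, ‖B w₁ - B w₂‖ ≤ C₀ * ‖w₁ - w₂‖
  volterra : ∀ w : HSp d T,
    ∀ᵐ p ∂(fracMeas T).prod (fracMeas T),
      p.2 < p.1 → (B w : ℝ × ℝ → EuclideanSpace ℝ (Fin d)) p = 0
  causal : ∀ t : ℝ, 0 < t → t ≤ T → ∀ w₁ w₂ : HSp d T,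
    (∀ᵐ ξ ∂fracMeas T, ξ < t →
        (w₁ : ℝ → EuclideanSpace ℝ (Fin d)) ξ = (w₂ : ℝ → EuclideanSpace ℝ (Fin d)) ξ) →
      ∀ᵐ r ∂fracMeas T, r < t →
        ∀ᵐ ξ ∂fracMeas T,
          (B w₁ : ℝ × ℝ → EuclideanSpace ℝ (Fin d)) (r, ξ) =
            (B w₂ : ℝ × ℝ → EuclideanSpace ℝ (Fin d)) (r, ξ)

/-- `w` solves the Volterra fixed-point equation `E(s,t,ψ)`:
`w(ξ) = ψ(ξ) + ∫ₛᵗ B̄(w)(r,ξ) dr` for a.e. `ξ ∈ (0,T)`. -/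
def SolvesE (d : ℕ) (T : ℝ) (B : HSp d T → HTen d T) (s t : ℝ)
    (ψ w : HSp d T) : Prop :=
  ∀ᵐ ξ ∂fracMeas T,
    (w : ℝ → EuclideanSpace ℝ (Fin d)) ξ =
      (ψ : ℝ → EuclideanSpace ℝ (Fin d)) ξ +
        ∫ r in Set.Ioc s t, (B w : ℝ × ℝ → EuclideanSpace ℝ (Fin d)) (r, ξ)


/-- **Assumption (B2)**: `B̄` is Fréchet differentiable with derivative `DB̄ : H → ℒ(H; H_⊗)`
which is bounded (uniformly), `γ`-Hölder continuous, and satisfies the Volterra and causality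
properties. -/
structure AssumptionB2 (d : ℕ) (T : ℝ) (B : HSp d T → HTen d T)
    (DB : HSp d T → HSp d T →L[ℝ] HTen d T) (C₀ γ : ℝ) : Prop where
  deriv : ∀ w : HSp d T, HasFDerivAt B (DB w) w
  bound : ∀ w η : HSp d T, ‖DB w η‖ ≤ C₀ * ‖η‖
  holder : ∀ w₁ w₂ : HSp d T, ‖DB w₁ - DB w₂‖ ≤ C₀ * ‖w₁ - w₂‖ ^ γ
  volterra : ∀ w η : HSp d T,
    ∀ᵐ p ∂(fracMeas T).prod (fracMeas T),
      p.2 < p.1 → (DB w η : ℝ × ℝ → EuclideanSpace ℝ (Fin d)) p = 0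
  causal : ∀ t : ℝ, 0 < t → t ≤ T → ∀ w₁ w₂ η₁ η₂ : HSp d T,
    (∀ᵐ ξ ∂fracMeas T, ξ < t →
        (w₁ : ℝ → EuclideanSpace ℝ (Fin d)) ξ = (w₂ : ℝ → EuclideanSpace ℝ (Fin d)) ξ) →
      (∀ᵐ ξ ∂fracMeas T, ξ < t →
          (η₁ : ℝ → EuclideanSpace ℝ (Fin d)) ξ = (η₂ : ℝ → EuclideanSpace ℝ (Fin d)) ξ) →
        ∀ᵐ r ∂fracMeas T, r < t →
          ∀ᵐ ξ ∂fracMeas T,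
            (DB w₁ η₁ : ℝ × ℝ → EuclideanSpace ℝ (Fin d)) (r, ξ) =
              (DB w₂ η₂ : ℝ × ℝ → EuclideanSpace ℝ (Fin d)) (r, ξ)

/-- `v` solves the linearized (first-variation) equation at the solution `S_{s,t}(ψ)` with
initial datum `η`: `v(ξ) = η(ξ) + ∫ₛᵗ (DB̄(S_{s,t}(ψ)) v)(r,ξ) dr` for a.e. `ξ ∈ (0,T)`. -/
def SolvesLinE (d : ℕ) (T : ℝ) (DB : HSp d T → HSp d T →L[ℝ] HTen d T)
    (s t : ℝ) (wbase η v : HSp d T) : Prop :=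
  ∀ᵐ ξ ∂fracMeas T,
    (v : ℝ → EuclideanSpace ℝ (Fin d)) ξ =
      (η : ℝ → EuclideanSpace ℝ (Fin d)) ξ +
        ∫ r in Set.Ioc s t, (DB wbase v : ℝ × ℝ → EuclideanSpace ℝ (Fin d)) (r, ξ)

open scoped ENNReal

set_option maxHeartbeats 1000000

namespace St10

variable {d : ℕ} {T : ℝ}

instance : IsFiniteMeasure (fracMeas T) := by
  constructor
  rw [Measure.restrict_apply_univ]
  exact (Real.volume_Ioo (a := 0) (b := T)) ▸ ENNReal.ofReal_lt_top



lemma norm_le_of_ae {f g : HSp d T} (h : ∀ᵐ x ∂fracMeas T, ‖(f : ℝ → EuclideanSpace ℝ (Fin d)) x‖ ≤ ‖(g : ℝ → EuclideanSpace ℝ (Fin d)) x‖) :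
    ‖f‖ ≤ ‖g‖ := by
  rw [Lp.norm_def, Lp.norm_def]
  exact ENNReal.toReal_mono (Lp.eLpNorm_ne_top g) (eLpNorm_mono_ae h)


lemma norm_ind_le {E : Type*} [SeminormedAddGroup E] (s : Set ℝ) (f : ℝ → E) (x : ℝ) :
    ‖s.indicator f x‖ ≤ ‖f x‖ := by
  classical
  simp only [Set.indicator_apply]
  split_ifs
  · exact le_rfl
  · simp

lemma memℒp_ind (a : ℝ) (f : HSp d T) :
    MemLp ((Set.Iio a).indicator ⇑f) 2 (fracMeas T) :=
  (Lp.memLp f).indicator measurableSet_Iio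

/-- cut-off (multiplication by the indicator of `(-∞, a)`) as a continuous linear map. -/
def cutL (a : ℝ) : HSp d T →L[ℝ] HSp d T :=
  LinearMap.mkContinuous
    { toFun := fun f => MemLp.toLp ((Set.Iio a).indicator ⇑f) (memℒp_ind a f)
      map_add' := by
        intro f g
        rw [← MemLp.toLp_add]
        refine MemLp.toLp_congr _ _ ?_
        filter_upwards [Lp.coeFn_add f g] with x hx
        simp only [Set.indicator_apply, Set.mem_Iio, Pi.add_apply]
        split_ifs with h
        · exact hx
        · simp
      map_smul' := by
        intro c f
        simp only [RingHom.id_apply]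
        rw [← MemLp.toLp_const_smul]
        refine MemLp.toLp_congr _ _ ?_
        filter_upwards [Lp.coeFn_smul c f] with x hx
        simp only [Set.indicator_apply, Set.mem_Iio, Pi.smul_apply]
        split_ifs with h
        · exact hx
        · simp }
    1
    (by
      intro f
      simp only [LinearMap.coe_mk, AddHom.coe_mk, one_mul]
      rw [Lp.norm_toLp, Lp.norm_def]
      exact ENNReal.toReal_mono (Lp.eLpNorm_ne_top f) (eLpNorm_indicator_le _))

lemma cutL_coe (a : ℝ) (f : HSp d T) :
    (cutL a f : ℝ → EuclideanSpace ℝ (Fin d)) =ᵐ[fracMeas T]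
      (Set.Iio a).indicator ⇑f := MemLp.coeFn_toLp (memℒp_ind a f)

lemma norm_cutL_le (a : ℝ) (f : HSp d T) : ‖cutL (T := T) a f‖ ≤ ‖f‖ := by
  refine norm_le_of_ae ?_
  filter_upwards [cutL_coe a f] with x hx
  rw [hx]
  exact norm_ind_le _ _ _

lemma norm_cutL_mono {a b : ℝ} (hab : a ≤ b) (f : HSp d T) :
    ‖cutL (T := T) a f‖ ≤ ‖cutL b f‖ := by
  refine norm_le_of_ae ?_
  filter_upwards [cutL_coe a f, cutL_coe b f] with x hx hx'
  rw [hx, hx']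
  simp only [Set.indicator_apply, Set.mem_Iio]
  split_ifs with h h'
  · exact le_rfl
  · exact absurd (h.trans_le hab) h'
  · simp
  · simp

lemma cutL_nonpos {a : ℝ} (ha : a ≤ 0) (f : HSp d T) : cutL a f = 0 := by
  refine Lp.ext ?_
  filter_upwards [cutL_coe a f, Lp.coeFn_zero (EuclideanSpace ℝ (Fin d)) 2 (fracMeas T),
    ae_restrict_mem (measurableSet_Ioo (a := (0:ℝ)) (b := T))] with x hx h0 hmem
  rw [hx, h0]
  exact Set.indicator_of_notMem
    (by simp only [Set.mem_Iio, not_lt]; exact le_trans ha hmem.1.le) _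

lemma cutL_ge {a : ℝ} (ha : T ≤ a) (f : HSp d T) : cutL a f = f := by
  refine Lp.ext ?_
  filter_upwards [cutL_coe a f,
    ae_restrict_mem (measurableSet_Ioo (a := (0:ℝ)) (b := T))] with x hx hmem
  rw [hx]
  exact Set.indicator_of_mem (Set.mem_Iio.2 (lt_of_lt_of_le hmem.2 ha)) _

lemma norm_cutL_sub_le {a b : ℝ} (hab : a ≤ b) (f : HSp d T) :
    ‖cutL (T := T) b f - cutL a f‖ ≤ ‖cutL b f‖ := by
  refine norm_le_of_ae ?_
  filter_upwards [Lp.coeFn_sub (cutL b f) (cutL a f), cutL_coe a f, cutL_coe b f]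
    with x hx ha hb
  rw [hx, Pi.sub_apply, ha, hb]
  simp only [Set.indicator_apply, Set.mem_Iio]
  split_ifs with h h' h''
  · simp
  · simp
  · exact absurd (h''.trans_le hab) h
  · simp

/-- `f` vanishes (a.e.) below level `a`. -/
def VanishBelow (a : ℝ) (f : HSp d T) : Prop :=
  ∀ᵐ x ∂fracMeas T, x < a → (f : ℝ → EuclideanSpace ℝ (Fin d)) x = 0

lemma vanishBelow_sub_cutL (a : ℝ) (f : HSp d T) : VanishBelow a (f - cutL a f) := by
  filter_upwards [Lp.coeFn_sub f (cutL a f), cutL_coe a f] with x hx ha hxa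
  rw [hx, Pi.sub_apply, ha, Set.indicator_of_mem (Set.mem_Iio.2 hxa), sub_self]

lemma vanishBelow_cutL_sub {a b : ℝ} (hab : a ≤ b) (f : HSp d T) :
    VanishBelow a (cutL (T := T) b f - cutL a f) := by
  filter_upwards [Lp.coeFn_sub (cutL b f) (cutL a f), cutL_coe a f, cutL_coe b f]
    with x hx ha hb hxa
  rw [hx, Pi.sub_apply, ha, hb, Set.indicator_of_mem (Set.mem_Iio.2 hxa),
    Set.indicator_of_mem (Set.mem_Iio.2 (hxa.trans_le hab)), sub_self]


lemma eLpNorm_two {α : Type*} [MeasurableSpace α] {ν : Measure α}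
    (f : α → EuclideanSpace ℝ (Fin d)) :
    eLpNorm f 2 ν = (∫⁻ x, (‖f x‖₊ : ℝ≥0∞) ^ (2 : ℕ) ∂ν) ^ (1/2 : ℝ) := by
  rw [eLpNorm_eq_lintegral_rpow_enorm_toReal two_ne_zero ENNReal.ofNat_ne_top]
  norm_num
  rfl

lemma two_isConj : (2:ℝ).HolderConjugate 2 :=
  (Real.holderConjugate_iff_eq_conjExponent (by norm_num)).2 (by norm_num)

/-- Cauchy–Schwarz for the Bochner integral, in `ℝ≥0∞`. -/
lemma enorm_integral_sq_le {α : Type*} [MeasurableSpace α] (ν : Measure α)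
    (g : α → EuclideanSpace ℝ (Fin d)) (hg : AEMeasurable (fun x => (‖g x‖₊ : ℝ≥0∞)) ν) :
    (‖∫ x, g x ∂ν‖₊ : ℝ≥0∞) ^ (2 : ℕ) ≤ ν Set.univ * ∫⁻ x, (‖g x‖₊ : ℝ≥0∞) ^ (2 : ℕ) ∂ν := by
  have h1 : (‖∫ x, g x ∂ν‖₊ : ℝ≥0∞) ≤ ∫⁻ x, (‖g x‖₊ : ℝ≥0∞) ∂ν :=
    enorm_integral_le_lintegral_enorm g
  have hCS := ENNReal.lintegral_mul_le_Lp_mul_Lq ν two_isConj hg aemeasurable_const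
    (g := fun _ => (1:ℝ≥0∞))
  simp only [Pi.mul_apply, mul_one, ENNReal.one_rpow, lintegral_one] at hCS
  have h2 : (∫⁻ x, (‖g x‖₊ : ℝ≥0∞) ∂ν) ^ (2:ℕ)
      ≤ ν Set.univ * ∫⁻ x, (‖g x‖₊ : ℝ≥0∞) ^ (2:ℕ) ∂ν := by
    calc (∫⁻ x, (‖g x‖₊ : ℝ≥0∞) ∂ν) ^ (2:ℕ)
        ≤ ((∫⁻ x, (‖g x‖₊ : ℝ≥0∞) ^ (2:ℝ) ∂ν) ^ (1/2:ℝ) * (ν Set.univ) ^ (1/2:ℝ)) ^ (2:ℕ) :=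
          pow_le_pow_left' hCS 2
      _ = ν Set.univ * ∫⁻ x, (‖g x‖₊ : ℝ≥0∞) ^ (2:ℕ) ∂ν := by
          rw [mul_pow, ← ENNReal.rpow_natCast (_ ^ (1/2:ℝ)) 2, ← ENNReal.rpow_natCast (_ ^ (1/2:ℝ)) 2,
            ← ENNReal.rpow_mul, ← ENNReal.rpow_mul]
          norm_num [mul_comm]
  exact le_trans (pow_le_pow_left' h1 2) h2

section ST

variable (s t : ℝ)

/-- The kernel integral `ξ ↦ ∫ₛᵗ F(r,ξ) dr`. -/
def Jfun (F : HTen d T) : ℝ → EuclideanSpace ℝ (Fin d) :=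
  fun ξ => ∫ r, (F : ℝ × ℝ → EuclideanSpace ℝ (Fin d)) (r, ξ)
    ∂((fracMeas T).restrict (Set.Ioc s t))

lemma integrable_coe (F : HTen d T) :
    Integrable (F : ℝ × ℝ → EuclideanSpace ℝ (Fin d))
      (((fracMeas T).restrict (Set.Ioc s t)).prod (fracMeas T)) := by
  have h := ((Lp.memLp F).integrable one_le_two).restrict
      (s := Set.Ioc s t ×ˢ (Set.univ : Set ℝ))
  rwa [← Measure.restrict_prod_eq_prod_univ] at h

lemma aestronglyMeasurable_Jfun (F : HTen d T) :
    AEStronglyMeasurable (Jfun s t F) (fracMeas T) := by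
  have hf : AEStronglyMeasurable (F : ℝ × ℝ → EuclideanSpace ℝ (Fin d))
      (((fracMeas T).restrict (Set.Ioc s t)).prod (fracMeas T)) := by
    have h := (Lp.aestronglyMeasurable F).restrict
        (s := Set.Ioc s t ×ˢ (Set.univ : Set ℝ))
    rwa [← Measure.restrict_prod_eq_prod_univ] at h
  have hswap : AEStronglyMeasurable
      ((F : ℝ × ℝ → EuclideanSpace ℝ (Fin d)) ∘ Prod.swap)
      ((fracMeas T).prod ((fracMeas T).restrict (Set.Ioc s t))) := by
    rw [Measure.measurePreserving_swap.aestronglyMeasurable_comp_iff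
      MeasurableEquiv.prodComm.measurableEmbedding]
    exact hf
  exact hswap.integral_prod_right'

/-- Volterra property for an element of `H⊗`. -/
def TVolterra (F : HTen d T) : Prop :=
  ∀ᵐ p ∂(fracMeas T).prod (fracMeas T),
    p.2 < p.1 → (F : ℝ × ℝ → EuclideanSpace ℝ (Fin d)) p = 0

/-- `F(r, ·) = 0` for a.e. `r < a`. -/
def TVanish (a : ℝ) (F : HTen d T) : Prop :=
  ∀ᵐ p ∂(fracMeas T).prod (fracMeas T),
    p.1 < a → (F : ℝ × ℝ → EuclideanSpace ℝ (Fin d)) p = 0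

lemma ae_swap {Q : ℝ × ℝ → Prop}
    (h : ∀ᵐ p ∂(fracMeas T).prod (fracMeas T), Q p) :
    ∀ᵐ p ∂(fracMeas T).prod (fracMeas T), Q p.swap := by
  have h2 : ∀ᵐ p ∂((fracMeas T).prod (fracMeas T)).map Prod.swap, Q p := by
    rwa [Measure.prod_swap]
  exact ae_of_ae_map measurable_swap.aemeasurable h2

/-- slicewise version (`ξ` outer, `r` inner) of combined Volterra/vanishing info. -/
lemma slices_of_tvol_tvan {a : ℝ} {F : HTen d T} (hvol : TVolterra F) (hvan : TVanish a F) :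
    ∀ᵐ ξ ∂fracMeas T, ∀ᵐ r ∂fracMeas T,
      (ξ < r → (F : ℝ × ℝ → EuclideanSpace ℝ (Fin d)) (r, ξ) = 0) ∧
      (r < a → (F : ℝ × ℝ → EuclideanSpace ℝ (Fin d)) (r, ξ) = 0) := by
  have h := Measure.ae_ae_of_ae_prod (ae_swap (hvol.and hvan))
  filter_upwards [h] with ξ hξ
  filter_upwards [hξ] with r hr
  exact hr

/-- If `F` is Volterra and vanishes below `b`, then `∫ₛᵗ F(r,ξ)dr = 0` for a.e. `ξ < b`. -/
lemma Jfun_ae_zero {b : ℝ} {F : HTen d T} (hvol : TVolterra F) (hvan : TVanish b F) :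
    ∀ᵐ ξ ∂fracMeas T, ξ < b → Jfun s t F ξ = 0 := by
  filter_upwards [slices_of_tvol_tvan hvol hvan] with ξ hξ hξb
  have h0 : (fun r => (F : ℝ × ℝ → EuclideanSpace ℝ (Fin d)) (r, ξ))
      =ᵐ[(fracMeas T).restrict (Set.Ioc s t)] 0 := by
    refine ae_restrict_of_ae ?_
    filter_upwards [hξ] with r hr
    rcases lt_or_ge r b with h | h
    · exact hr.2 h
    · exact hr.1 (lt_of_lt_of_le hξb h)
  rw [Jfun, integral_congr_ae h0]
  simp

/-- The quantitative bound for `Jfun` below `b`, given vanishing below `a`. -/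
lemma pointwise_bound {a b : ℝ} {F : HTen d T} (hvol : TVolterra F) (hvan : TVanish a F) :
    ∀ᵐ ξ ∂fracMeas T,
      (‖(Set.Iio b).indicator (Jfun s t F) ξ‖₊ : ℝ≥0∞) ^ (2:ℕ)
        ≤ ENNReal.ofReal (max (b - a) 0) *
          ∫⁻ r, (‖(F : ℝ × ℝ → EuclideanSpace ℝ (Fin d)) (r, ξ)‖₊ : ℝ≥0∞) ^ (2:ℕ) ∂fracMeas T := by
  filter_upwards [slices_of_tvol_tvan hvol hvan,
    (integrable_coe s t F).prod_left_ae] with ξ hξ hint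
  by_cases hb : ξ < b
  · rw [Set.indicator_of_mem (Set.mem_Iio.2 hb)]
    set ν := (fracMeas T).restrict (Set.Ioc s t) with hν
    have hsl : (fun r => (F : ℝ × ℝ → EuclideanSpace ℝ (Fin d)) (r, ξ))
        =ᵐ[ν] (Set.Icc a ξ).indicator
          (fun r => (F : ℝ × ℝ → EuclideanSpace ℝ (Fin d)) (r, ξ)) := by
      refine ae_restrict_of_ae ?_
      filter_upwards [hξ] with r hr
      by_cases hmem : r ∈ Set.Icc a ξ
      · rw [Set.indicator_of_mem hmem]
      · rw [Set.indicator_of_notMem hmem]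
        rcases not_and_or.1 hmem with h | h
        · exact hr.2 (lt_of_not_ge h)
        · exact hr.1 (lt_of_not_ge h)
    have hJ : Jfun s t F ξ
        = ∫ r, (F : ℝ × ℝ → EuclideanSpace ℝ (Fin d)) (r, ξ) ∂(ν.restrict (Set.Icc a ξ)) := by
      rw [Jfun, integral_congr_ae hsl, integral_indicator measurableSet_Icc]
    rw [hJ]
    calc (‖∫ r, (F : ℝ × ℝ → EuclideanSpace ℝ (Fin d)) (r, ξ)
            ∂(ν.restrict (Set.Icc a ξ))‖₊ : ℝ≥0∞) ^ (2:ℕ)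
        ≤ (ν.restrict (Set.Icc a ξ)) Set.univ *
          ∫⁻ r, (‖(F : ℝ × ℝ → EuclideanSpace ℝ (Fin d)) (r, ξ)‖₊ : ℝ≥0∞) ^ (2:ℕ)
            ∂(ν.restrict (Set.Icc a ξ)) :=
          enorm_integral_sq_le _ _ ((hint.restrict.aestronglyMeasurable).enorm)
      _ ≤ ENNReal.ofReal (max (b - a) 0) *
          ∫⁻ r, (‖(F : ℝ × ℝ → EuclideanSpace ℝ (Fin d)) (r, ξ)‖₊ : ℝ≥0∞) ^ (2:ℕ) ∂fracMeas T := by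
          refine mul_le_mul' ?_ ?_
          · rw [Measure.restrict_apply_univ]
            calc ν (Set.Icc a ξ) ≤ (fracMeas T) (Set.Icc a ξ) :=
                  Measure.restrict_le_self _
              _ ≤ volume (Set.Icc a ξ) := Measure.restrict_le_self _
              _ = ENNReal.ofReal (ξ - a) := Real.volume_Icc
              _ ≤ ENNReal.ofReal (max (b - a) 0) :=
                  ENNReal.ofReal_le_ofReal (le_max_of_le_left (by linarith))
          · exact le_trans (lintegral_mono' (Measure.restrict_le_self) le_rfl)
              (lintegral_mono' (Measure.restrict_le_self) le_rfl)
  · rw [Set.indicator_of_notMem (by simpa using hb)]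
    simp

/-- Global pointwise bound (no vanishing hypotheses). -/
lemma pointwise_bound_glob (F : HTen d T) :
    ∀ᵐ ξ ∂fracMeas T,
      (‖Jfun s t F ξ‖₊ : ℝ≥0∞) ^ (2:ℕ)
        ≤ ENNReal.ofReal (max (t - s) 0) *
          ∫⁻ r, (‖(F : ℝ × ℝ → EuclideanSpace ℝ (Fin d)) (r, ξ)‖₊ : ℝ≥0∞) ^ (2:ℕ) ∂fracMeas T := by
  filter_upwards [(integrable_coe s t F).prod_left_ae] with ξ hint
  set ν := (fracMeas T).restrict (Set.Ioc s t) with hν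
  calc (‖Jfun s t F ξ‖₊ : ℝ≥0∞) ^ (2:ℕ)
      ≤ ν Set.univ *
        ∫⁻ r, (‖(F : ℝ × ℝ → EuclideanSpace ℝ (Fin d)) (r, ξ)‖₊ : ℝ≥0∞) ^ (2:ℕ) ∂ν :=
        enorm_integral_sq_le _ _ ((hint.aestronglyMeasurable).enorm)
    _ ≤ ENNReal.ofReal (max (t - s) 0) *
        ∫⁻ r, (‖(F : ℝ × ℝ → EuclideanSpace ℝ (Fin d)) (r, ξ)‖₊ : ℝ≥0∞) ^ (2:ℕ) ∂fracMeas T := by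
        refine mul_le_mul' ?_ (lintegral_mono' (Measure.restrict_le_self) le_rfl)
        rw [Measure.restrict_apply_univ]
        calc (fracMeas T) (Set.Ioc s t) ≤ volume (Set.Ioc s t) := Measure.restrict_le_self _
          _ = ENNReal.ofReal (t - s) := Real.volume_Ioc
          _ ≤ ENNReal.ofReal (max (t - s) 0) :=
              ENNReal.ofReal_le_ofReal (le_max_left _ _)

/-- master integration lemma. -/
lemma eLpNorm_le_of_pointwise (F : HTen d T) (g : ℝ → EuclideanSpace ℝ (Fin d)) (c : ℝ≥0∞)
    (hc : c ≠ ⊤)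
    (h : ∀ᵐ ξ ∂fracMeas T,
      (‖g ξ‖₊ : ℝ≥0∞) ^ (2:ℕ)
        ≤ c * ∫⁻ r, (‖(F : ℝ × ℝ → EuclideanSpace ℝ (Fin d)) (r, ξ)‖₊ : ℝ≥0∞) ^ (2:ℕ)
            ∂fracMeas T) :
    eLpNorm g 2 (fracMeas T)
      ≤ c ^ (1/2:ℝ) * eLpNorm (F : ℝ × ℝ → EuclideanSpace ℝ (Fin d)) 2
          ((fracMeas T).prod (fracMeas T)) := by
  have hmeas : AEMeasurable
      (fun p : ℝ × ℝ => (‖(F : ℝ × ℝ → EuclideanSpace ℝ (Fin d)) p‖₊ : ℝ≥0∞) ^ (2:ℕ))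
      ((fracMeas T).prod (fracMeas T)) :=
    ((Lp.aestronglyMeasurable F).enorm).pow_const 2
  have hswapmeas : AEMeasurable
      ((fun p : ℝ × ℝ => (‖(F : ℝ × ℝ → EuclideanSpace ℝ (Fin d)) p‖₊ : ℝ≥0∞) ^ (2:ℕ))
        ∘ Prod.swap) ((fracMeas T).prod (fracMeas T)) := by
    rw [Measure.measurePreserving_swap.aemeasurable_comp_iff
      MeasurableEquiv.prodComm.measurableEmbedding]
    exact hmeas
  have h1 : ∫⁻ ξ, (‖g ξ‖₊ : ℝ≥0∞) ^ (2:ℕ) ∂fracMeas T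
      ≤ c * ∫⁻ p, (‖(F : ℝ × ℝ → EuclideanSpace ℝ (Fin d)) p‖₊ : ℝ≥0∞) ^ (2:ℕ)
          ∂(fracMeas T).prod (fracMeas T) := by
    calc ∫⁻ ξ, (‖g ξ‖₊ : ℝ≥0∞) ^ (2:ℕ) ∂fracMeas T
        ≤ ∫⁻ ξ, c * ∫⁻ r, (‖(F : ℝ × ℝ → EuclideanSpace ℝ (Fin d)) (r, ξ)‖₊ : ℝ≥0∞) ^ (2:ℕ)
            ∂fracMeas T ∂fracMeas T := lintegral_mono_ae h
      _ = c * ∫⁻ ξ, ∫⁻ r, (‖(F : ℝ × ℝ → EuclideanSpace ℝ (Fin d)) (r, ξ)‖₊ : ℝ≥0∞) ^ (2:ℕ)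
            ∂fracMeas T ∂fracMeas T := lintegral_const_mul' _ _ hc
      _ = c * ∫⁻ p, (‖(F : ℝ × ℝ → EuclideanSpace ℝ (Fin d)) p‖₊ : ℝ≥0∞) ^ (2:ℕ)
            ∂(fracMeas T).prod (fracMeas T) := by
          congr 1
          have hswapmeas' : AEMeasurable (Function.uncurry fun ξ r =>
              (‖(F : ℝ × ℝ → EuclideanSpace ℝ (Fin d)) (r, ξ)‖₊ : ℝ≥0∞) ^ (2:ℕ))
              ((fracMeas T).prod (fracMeas T)) := hswapmeas
          rw [lintegral_lintegral_swap hswapmeas']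
          have := lintegral_lintegral (μ := fracMeas T) (ν := fracMeas T)
            (f := fun r ξ =>
              (‖(F : ℝ × ℝ → EuclideanSpace ℝ (Fin d)) (r, ξ)‖₊ : ℝ≥0∞) ^ (2:ℕ)) hmeas
          exact this
  rw [eLpNorm_two, eLpNorm_two]
  calc (∫⁻ x, (‖g x‖₊ : ℝ≥0∞) ^ (2:ℕ) ∂fracMeas T) ^ (1/2:ℝ)
      ≤ (c * ∫⁻ p, (‖(F : ℝ × ℝ → EuclideanSpace ℝ (Fin d)) p‖₊ : ℝ≥0∞) ^ (2:ℕ)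
          ∂(fracMeas T).prod (fracMeas T)) ^ (1/2:ℝ) :=
        ENNReal.rpow_le_rpow h1 (by norm_num)
    _ = _ := ENNReal.mul_rpow_of_nonneg _ _ (by norm_num)

lemma memℒp_Jfun (F : HTen d T) : MemLp (Jfun s t F) 2 (fracMeas T) := by
  refine ⟨aestronglyMeasurable_Jfun s t F, ?_⟩
  refine lt_of_le_of_lt (eLpNorm_le_of_pointwise F _ _ ENNReal.ofReal_ne_top
    (pointwise_bound_glob s t F)) ?_
  exact ENNReal.mul_lt_top
    (ENNReal.rpow_lt_top_of_nonneg (by norm_num) ENNReal.ofReal_ne_top)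
    (Lp.eLpNorm_lt_top F)

lemma Jfun_add (F G : HTen d T) :
    Jfun s t (F + G) =ᵐ[fracMeas T] Jfun s t F + Jfun s t G := by
  have hadd : ∀ᵐ ξ ∂fracMeas T, ∀ᵐ r ∂fracMeas T,
      ((F + G : HTen d T) : ℝ × ℝ → EuclideanSpace ℝ (Fin d)) (r, ξ)
        = (F : ℝ × ℝ → EuclideanSpace ℝ (Fin d)) (r, ξ)
          + (G : ℝ × ℝ → EuclideanSpace ℝ (Fin d)) (r, ξ) := by
    have h := Measure.ae_ae_of_ae_prod (ae_swap (Lp.coeFn_add F G))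
    filter_upwards [h] with ξ hξ
    filter_upwards [hξ] with r hr
    exact hr
  filter_upwards [hadd, (integrable_coe s t F).prod_left_ae,
    (integrable_coe s t G).prod_left_ae] with ξ hξ hiF hiG
  have : (fun r => ((F + G : HTen d T) : ℝ × ℝ → EuclideanSpace ℝ (Fin d)) (r, ξ))
      =ᵐ[(fracMeas T).restrict (Set.Ioc s t)]
      fun r => (F : ℝ × ℝ → EuclideanSpace ℝ (Fin d)) (r, ξ)
        + (G : ℝ × ℝ → EuclideanSpace ℝ (Fin d)) (r, ξ) :=
    ae_restrict_of_ae hξ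
  rw [Jfun, integral_congr_ae this, integral_add hiF hiG]
  rfl

lemma Jfun_smul (c : ℝ) (F : HTen d T) :
    Jfun s t (c • F) =ᵐ[fracMeas T] c • Jfun s t F := by
  have hsmul : ∀ᵐ ξ ∂fracMeas T, ∀ᵐ r ∂fracMeas T,
      ((c • F : HTen d T) : ℝ × ℝ → EuclideanSpace ℝ (Fin d)) (r, ξ)
        = c • (F : ℝ × ℝ → EuclideanSpace ℝ (Fin d)) (r, ξ) := by
    have h := Measure.ae_ae_of_ae_prod (ae_swap (Lp.coeFn_smul c F))
    filter_upwards [h] with ξ hξ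
    filter_upwards [hξ] with r hr
    exact hr
  filter_upwards [hsmul] with ξ hξ
  have : (fun r => ((c • F : HTen d T) : ℝ × ℝ → EuclideanSpace ℝ (Fin d)) (r, ξ))
      =ᵐ[(fracMeas T).restrict (Set.Ioc s t)]
      fun r => c • (F : ℝ × ℝ → EuclideanSpace ℝ (Fin d)) (r, ξ) :=
    ae_restrict_of_ae hξ
  rw [Jfun, Pi.smul_apply, integral_congr_ae this, integral_smul]
  rfl

/-- The integral operator `I_{s,t} : H⊗ → H` as a continuous linear map. -/
def ViL : HTen d T →L[ℝ] HSp d T :=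
  LinearMap.mkContinuous
    { toFun := fun F => MemLp.toLp (Jfun s t F) (memℒp_Jfun s t F)
      map_add' := by
        intro F G
        rw [← MemLp.toLp_add]
        exact MemLp.toLp_congr _ _ (Jfun_add s t F G)
      map_smul' := by
        intro c F
        simp only [RingHom.id_apply]
        rw [← MemLp.toLp_const_smul]
        exact MemLp.toLp_congr _ _ (Jfun_smul s t c F) }
    (Real.sqrt (max (t - s) 0))
    (by
      intro F
      simp only [LinearMap.coe_mk, AddHom.coe_mk]
      rw [Lp.norm_toLp, Lp.norm_def]
      have h := eLpNorm_le_of_pointwise F _ _ ENNReal.ofReal_ne_top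
        (pointwise_bound_glob s t F)
      calc (eLpNorm (Jfun s t F) 2 (fracMeas T)).toReal
          ≤ ((ENNReal.ofReal (max (t - s) 0)) ^ (1/2:ℝ) *
            eLpNorm (F : ℝ × ℝ → EuclideanSpace ℝ (Fin d)) 2
              ((fracMeas T).prod (fracMeas T))).toReal := by
            refine ENNReal.toReal_mono ?_ h
            exact ENNReal.mul_ne_top
              (ENNReal.rpow_ne_top_of_nonneg (by norm_num) ENNReal.ofReal_ne_top)
              (Lp.eLpNorm_ne_top F)
        _ = Real.sqrt (max (t - s) 0) * ‖F‖ := by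
            rw [ENNReal.toReal_mul, ← ENNReal.toReal_rpow, ENNReal.toReal_ofReal
              (le_max_right _ _), Real.sqrt_eq_rpow]
            rfl)

lemma coe_ViL (F : HTen d T) :
    (ViL s t F : ℝ → EuclideanSpace ℝ (Fin d)) =ᵐ[fracMeas T] Jfun s t F :=
  MemLp.coeFn_toLp (memℒp_Jfun s t F)

lemma norm_ViL_le (F : HTen d T) :
    ‖ViL s t F‖ ≤ Real.sqrt (max (t - s) 0) * ‖F‖ :=
  calc ‖ViL s t F‖ ≤ ‖ViL (d := d) (T := T) s t‖ * ‖F‖ :=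
        (ViL s t).le_opNorm F
    _ ≤ Real.sqrt (max (t - s) 0) * ‖F‖ :=
        mul_le_mul_of_nonneg_right
          (LinearMap.mkContinuous_norm_le _ (Real.sqrt_nonneg _) _) (norm_nonneg F)


lemma coe_cutL_ViL (b : ℝ) (F : HTen d T) :
    (cutL b (ViL s t F) : ℝ → EuclideanSpace ℝ (Fin d)) =ᵐ[fracMeas T]
      (Set.Iio b).indicator (Jfun s t F) := by
  filter_upwards [cutL_coe b (ViL s t F), coe_ViL s t F] with ξ h1 h2
  rw [h1]
  by_cases h : ξ ∈ Set.Iio b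
  · rw [Set.indicator_of_mem h, Set.indicator_of_mem h, h2]
  · rw [Set.indicator_of_notMem h, Set.indicator_of_notMem h]

lemma cutL_ViL_zero {b : ℝ} {F : HTen d T} (hvol : TVolterra F) (hvan : TVanish b F) :
    cutL b (ViL s t F) = 0 := by
  refine Lp.ext ?_
  filter_upwards [coe_cutL_ViL s t b F, Jfun_ae_zero s t hvol hvan,
    Lp.coeFn_zero (EuclideanSpace ℝ (Fin d)) 2 (fracMeas T)] with ξ h1 h2 h0
  rw [h1, h0]
  by_cases h : ξ ∈ Set.Iio b
  · rw [Set.indicator_of_mem h, h2 h]; simp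
  · rw [Set.indicator_of_notMem h]; simp

lemma norm_cutL_ViL_le {a b : ℝ} (hab : a ≤ b) {F : HTen d T}
    (hvol : TVolterra F) (hvan : TVanish a F) :
    ‖cutL b (ViL s t F)‖ ≤ Real.sqrt (b - a) * ‖F‖ := by
  rw [Lp.norm_def, eLpNorm_congr_ae (coe_cutL_ViL s t b F)]
  have h := eLpNorm_le_of_pointwise F _ _ ENNReal.ofReal_ne_top (pointwise_bound s t (b := b) hvol hvan)
  calc (eLpNorm ((Set.Iio b).indicator (Jfun s t F)) 2 (fracMeas T)).toReal
      ≤ ((ENNReal.ofReal (max (b - a) 0)) ^ (1/2:ℝ) *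
        eLpNorm (F : ℝ × ℝ → EuclideanSpace ℝ (Fin d)) 2
          ((fracMeas T).prod (fracMeas T))).toReal := by
        refine ENNReal.toReal_mono ?_ h
        exact ENNReal.mul_ne_top
          (ENNReal.rpow_ne_top_of_nonneg (by norm_num) ENNReal.ofReal_ne_top)
          (Lp.eLpNorm_ne_top F)
    _ = Real.sqrt (b - a) * ‖F‖ := by
        rw [ENNReal.toReal_mul, ← ENNReal.toReal_rpow, ENNReal.toReal_ofReal
          (le_max_right _ _), Real.sqrt_eq_rpow, Lp.norm_def]
        rw [max_eq_left (by linarith)]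

/-- On `[0, T]`, the defining integral of `Jfun` coincides with the Lebesgue integral
over `Ioc s t` used in `SolvesE`. -/
lemma Jfun_eq_volume (h0s : 0 ≤ s) (htT : t ≤ T) (F : HTen d T) (ξ : ℝ) :
    Jfun s t F ξ = ∫ r in Set.Ioc s t, (F : ℝ × ℝ → EuclideanSpace ℝ (Fin d)) (r, ξ) := by
  rw [Jfun]
  congr 1
  rw [Measure.restrict_restrict measurableSet_Ioc]
  refine Measure.restrict_congr_set ?_
  rw [MeasureTheory.ae_eq_set]
  constructor
  · have he : (Set.Ioc s t ∩ Set.Ioo 0 T) \ Set.Ioc s t = ∅ :=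
      Set.diff_eq_empty.2 Set.inter_subset_left
    rw [he]; exact measure_empty
  · refine measure_mono_null (fun r hr => ?_) (measure_singleton t)
    obtain ⟨hr1, hr2⟩ := hr
    have h3 : 0 < r := lt_of_le_of_lt h0s hr1.1
    have h4 : T ≤ r := by
      by_contra h5
      exact hr2 ⟨hr1, h3, lt_of_not_ge h5⟩
    exact Set.mem_singleton_iff.2 (le_antisymm hr1.2 (htT.trans h4))

section CAUSAL

lemma ae_prod_fst_mem :
    ∀ᵐ p ∂(fracMeas T).prod (fracMeas T), 0 < p.1 ∧ p.1 < T := by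
  have h1 : (fracMeas T) (Set.Ioo 0 T)ᶜ = 0 := by
    have := ae_restrict_mem (μ := volume) (measurableSet_Ioo (a := (0:ℝ)) (b := T))
    rwa [ae_iff] at this
  have : ((fracMeas T).prod (fracMeas T)) ((Set.Ioo 0 T)ᶜ ×ˢ (Set.univ : Set ℝ)) = 0 := by
    rw [Measure.prod_prod, h1, zero_mul]
  rw [ae_iff]
  have h3 : {p : ℝ × ℝ | ¬(0 < p.1 ∧ p.1 < T)} = (Set.Ioo 0 T)ᶜ ×ˢ (Set.univ : Set ℝ) := by
    ext p
    simp [Set.mem_prod, Set.mem_Ioo]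
  rw [h3]
  exact this

/-- From an iterated a.e. vanishing statement to the product (`TVanish`) form. -/
lemma tvanish_of_ae_ae {a : ℝ} {F : HTen d T}
    (h : ∀ᵐ r ∂fracMeas T, r < a →
      ∀ᵐ ξ ∂fracMeas T, (F : ℝ × ℝ → EuclideanSpace ℝ (Fin d)) (r, ξ) = 0) :
    TVanish a F := by
  set f := (F : ℝ × ℝ → EuclideanSpace ℝ (Fin d)) with hf
  have hF := Lp.aestronglyMeasurable F
  set f' := hF.mk f with hf'
  have hmk : StronglyMeasurable f' := hF.stronglyMeasurable_mk
  have heq : f =ᵐ[(fracMeas T).prod (fracMeas T)] f' := hF.ae_eq_mk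
  have hsl : ∀ᵐ r ∂fracMeas T, (fun ξ => f (r, ξ)) =ᵐ[fracMeas T] fun ξ => f' (r, ξ) :=
    Measure.ae_ae_of_ae_prod heq
  have h' : ∀ᵐ r ∂fracMeas T, r < a → ∀ᵐ ξ ∂fracMeas T, f' (r, ξ) = 0 := by
    filter_upwards [h, hsl] with r hr hslr hra
    filter_upwards [hr hra, hslr] with ξ h1 h2
    rw [← h2, h1]
  have m1 : MeasurableSet {p : ℝ × ℝ | p.1 < a} :=
    measurable_fst measurableSet_Iio
  have m2 : MeasurableSet {p : ℝ × ℝ | f' p = 0} :=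
    hmk.measurableSet_eq_fun stronglyMeasurable_const
  set sbad := {p : ℝ × ℝ | p.1 < a} ∩ {p : ℝ × ℝ | f' p = 0}ᶜ with hsbad
  have msbad : MeasurableSet sbad := m1.inter m2.compl
  have hnull : ((fracMeas T).prod (fracMeas T)) sbad = 0 := by
    rw [Measure.prod_apply msbad]
    have hz : ∀ᵐ r ∂fracMeas T, (fracMeas T) (Prod.mk r ⁻¹' sbad) = 0 := by
      filter_upwards [h'] with r hr
      by_cases hra : r < a
      · have hnull2 : (fracMeas T) {ξ | ¬ f' (r, ξ) = 0} = 0 := by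
          have := hr hra
          rwa [ae_iff] at this
        refine measure_mono_null (fun ξ hξ => ?_) hnull2
        exact hξ.2
      · have : Prod.mk r ⁻¹' sbad = ∅ := by
          ext ξ
          simp only [Set.mem_preimage, Set.mem_empty_iff_false, iff_false, hsbad]
          intro hmem
          exact hra hmem.1
        rw [this]; exact measure_empty
    rw [lintegral_congr_ae hz]
    simp
  have hae : ∀ᵐ p ∂(fracMeas T).prod (fracMeas T), p ∉ sbad := by
    rw [ae_iff]
    simpa using hnull
  filter_upwards [hae, heq] with p hp hpeq hpa
  by_contra hne
  exact hp ⟨hpa, fun hzero => hne (hpeq.trans hzero)⟩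

variable {B : HSp d T → HTen d T} {DB : HSp d T → HSp d T →L[ℝ] HTen d T} {C₀ γ : ℝ}

lemma tvanish_DB (hB2 : AssumptionB2 d T B DB C₀ γ) {a : ℝ} (haT : a ≤ T)
    (w η : HSp d T) (hη : VanishBelow a η) : TVanish a (DB w η) := by
  rcases le_or_gt a 0 with ha | ha
  · filter_upwards [ae_prod_fst_mem] with p hp hpa
    exact absurd (lt_of_lt_of_le (lt_of_lt_of_le hpa ha) le_rfl) (not_lt.2 hp.1.le)
  · have hc := hB2.causal a ha haT w w η 0
      (Filter.Eventually.of_forall fun ξ _ => rfl)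
      (by
        filter_upwards [hη, Lp.coeFn_zero (EuclideanSpace ℝ (Fin d)) 2 (fracMeas T)]
          with ξ h1 h2 hξa
        rw [h1 hξa, h2]; rfl)
    have h0 : ∀ᵐ r ∂fracMeas T,
        (fun ξ => ((DB w 0 : HTen d T) : ℝ × ℝ → EuclideanSpace ℝ (Fin d)) (r, ξ))
          =ᵐ[fracMeas T] fun _ => (0 : EuclideanSpace ℝ (Fin d)) := by
      have hz : ((DB w 0 : HTen d T) : ℝ × ℝ → EuclideanSpace ℝ (Fin d))
          =ᵐ[(fracMeas T).prod (fracMeas T)] fun _ => 0 := by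
        rw [(DB w).map_zero]
        exact Lp.coeFn_zero _ _ _
      exact Measure.ae_ae_of_ae_prod hz
    refine tvanish_of_ae_ae ?_
    filter_upwards [hc, h0] with r hr h0r hra
    filter_upwards [hr hra, h0r] with ξ h1 h2
    rw [h1, h2]

lemma tvanish_B_sub (hB1 : AssumptionB1 d T B C₀) {a : ℝ} (haT : a ≤ T)
    (w₁ w₂ : HSp d T)
    (hagree : ∀ᵐ ξ ∂fracMeas T, ξ < a →
      (w₁ : ℝ → EuclideanSpace ℝ (Fin d)) ξ = (w₂ : ℝ → EuclideanSpace ℝ (Fin d)) ξ) :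
    TVanish a (B w₁ - B w₂) := by
  rcases le_or_gt a 0 with ha | ha
  · filter_upwards [ae_prod_fst_mem] with p hp hpa
    exact absurd (lt_of_lt_of_le hpa ha) (not_lt.2 hp.1.le)
  · have hc := hB1.causal a ha haT w₁ w₂ hagree
    refine tvanish_of_ae_ae ?_
    have hsub := Measure.ae_ae_of_ae_prod (Lp.coeFn_sub (B w₁) (B w₂))
    filter_upwards [hc, hsub] with r hr hsubr hra
    filter_upwards [hr hra, hsubr] with ξ h1 h2
    rw [h2, Pi.sub_apply, h1, sub_self]

lemma tvolterra_sub {F G : HTen d T} (hF : TVolterra F) (hG : TVolterra G) :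
    TVolterra (F - G) := by
  filter_upwards [hF, hG, Lp.coeFn_sub F G] with p h1 h2 h3 hp
  rw [h3, Pi.sub_apply, h1 hp, h2 hp, sub_self]

/-- The Volterra integral operator `K_w = I_{s,t} ∘ DB(w)`. -/
def Kop (DB : HSp d T → HSp d T →L[ℝ] HTen d T) (w : HSp d T) : HSp d T →L[ℝ] HSp d T :=
  (ViL s t).comp (DB w)

variable {hB2x : True}

lemma kop_cut_zero (hB2 : AssumptionB2 d T B DB C₀ γ) {a : ℝ} (haT : a ≤ T)
    (w v : HSp d T) (hv : VanishBelow a v) : cutL a (Kop s t DB w v) = 0 :=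
  cutL_ViL_zero s t (hB2.volterra w v) (tvanish_DB hB2 haT w v hv)

lemma kop_local (hB2 : AssumptionB2 d T B DB C₀ γ) {a b : ℝ} (hab : a ≤ b) (haT : a ≤ T)
    (hC₀ : 0 ≤ C₀) (w v : HSp d T) (hv : VanishBelow a v) :
    ‖cutL b (Kop s t DB w v)‖ ≤ (Real.sqrt (b - a) * C₀) * ‖v‖ := by
  calc ‖cutL b (Kop s t DB w v)‖
      ≤ Real.sqrt (b - a) * ‖DB w v‖ :=
        norm_cutL_ViL_le s t hab (hB2.volterra w v) (tvanish_DB hB2 haT w v hv)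
    _ ≤ (Real.sqrt (b - a) * C₀) * ‖v‖ := by
        rw [mul_assoc]
        exact mul_le_mul_of_nonneg_left (hB2.bound w v) (Real.sqrt_nonneg _)

lemma kop_causal (hB2 : AssumptionB2 d T B DB C₀ γ) {a : ℝ} (haT : a ≤ T)
    (w v : HSp d T) :
    cutL a (Kop s t DB w v) = cutL a (Kop s t DB w (cutL a v)) := by
  have h := kop_cut_zero s t hB2 haT w (v - cutL a v) (vanishBelow_sub_cutL a v)
  rw [map_sub, map_sub] at h
  exact sub_eq_zero.1 h

end CAUSAL

section KN
variable {B : HSp d T → HTen d T} {DB : HSp d T → HSp d T →L[ℝ] HTen d T} {C₀ γ : ℝ}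
lemma kop_norm (hB2 : AssumptionB2 d T B DB C₀ γ) (h0s : 0 ≤ s) (hst : s ≤ t) (htT : t ≤ T)
    (hC₀ : 0 ≤ C₀) (w v : HSp d T) :
    ‖Kop s t DB w v‖ ≤ (Real.sqrt T * C₀) * ‖v‖ := by
  calc ‖Kop s t DB w v‖ ≤ Real.sqrt (max (t - s) 0) * ‖DB w v‖ := norm_ViL_le s t _
    _ ≤ (Real.sqrt T * C₀) * ‖v‖ := by
        rw [mul_assoc]
        refine mul_le_mul (Real.sqrt_le_sqrt ?_) (hB2.bound w v)
          (norm_nonneg _) (Real.sqrt_nonneg _)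
        exact max_le (by linarith) (by linarith)

end KN

end ST

section REC

variable {d : ℕ} {T : ℝ}

/-- The abstract block-recursion estimate. -/
lemma rec_estimate (hT : 0 < T) {N : ℕ} (hN : 0 < N) (v η G : HSp d T) (hv : v = η + G)
    (CA ε : ℝ) (hCA : 0 ≤ CA) (hε0 : 0 ≤ ε) (hε : ε ≤ 1/2)
    (hG : ∀ i : ℕ, i < N →
      ‖cutL (((i:ℝ)+1) * (T/N)) G‖
        ≤ CA * ‖cutL ((i:ℝ) * (T/N)) v‖ + ε * ‖cutL (((i:ℝ)+1) * (T/N)) v‖) :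
    ‖v‖ ≤ (2 + 2*CA)^N * ‖η‖ := by
  have hbase : (1:ℝ) ≤ 2 + 2*CA := by linarith
  have key : ∀ i : ℕ, i ≤ N → ‖cutL ((i:ℝ) * (T/N)) v‖ ≤ (2 + 2*CA)^i * ‖η‖ := by
    intro i
    induction i with
    | zero =>
      intro _
      simp only [Nat.cast_zero, zero_mul, pow_zero, one_mul]
      rw [cutL_nonpos le_rfl v]
      simpa using norm_nonneg η
    | succ i ih =>
      intro hi
      push_cast
      have hiN : i < N := Nat.lt_of_succ_le hi
      have hIH := ih (Nat.le_of_lt hiN)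
      set xi := ‖cutL ((i:ℝ) * (T/N)) v‖ with hxi
      set xs := ‖cutL (((i:ℝ)+1) * (T/N)) v‖ with hxs
      set P := (2 + 2*CA)^i with hP
      have h1 : xs ≤ ‖η‖ + (CA * xi + ε * xs) := by
        calc xs = ‖cutL (((i:ℝ)+1) * (T/N)) η + cutL (((i:ℝ)+1) * (T/N)) G‖ := by
              rw [← map_add, ← hv]
          _ ≤ ‖cutL (((i:ℝ)+1) * (T/N)) η‖ + ‖cutL (((i:ℝ)+1) * (T/N)) G‖ := norm_add_le _ _
          _ ≤ ‖η‖ + (CA * xi + ε * xs) := add_le_add (norm_cutL_le _ _) (hG i hiN)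
      have hx0 : (0:ℝ) ≤ xs := norm_nonneg _
      have hx1 : (0:ℝ) ≤ xi := norm_nonneg _
      have hη0 : (0:ℝ) ≤ ‖η‖ := norm_nonneg _
      have hpow : (1:ℝ) ≤ P := one_le_pow₀ hbase
      have hIH' : xi ≤ P * ‖η‖ := hIH
      have hgoal : xs ≤ (2 + 2*CA) * (P * ‖η‖) := by nlinarith
      calc xs ≤ (2 + 2*CA) * (P * ‖η‖) := hgoal
        _ = (2 + 2*CA)^(i+1) * ‖η‖ := by rw [hP, pow_succ]; ring
  have hNT : ((N:ℝ)) * (T/N) = T := by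
    field_simp
  have := key N le_rfl
  rwa [hNT, cutL_ge le_rfl] at this

end REC

section EST

variable {d : ℕ} {T : ℝ} {B : HSp d T → HTen d T}
variable {DB : HSp d T → HSp d T →L[ℝ] HTen d T} {C₀ γ : ℝ}

lemma kop_est (hT : 0 < T) (hB2 : AssumptionB2 d T B DB C₀ γ) (hC₀ : 0 ≤ C₀)
    {N : ℕ} (hN : 0 < N) (hδ : Real.sqrt (T/N) * C₀ ≤ 1/2)
    {s t : ℝ} (h0s : 0 ≤ s) (hst : s ≤ t) (htT : t ≤ T)
    (w : HSp d T) (c : ℝ) (hc : |c| ≤ 1) (v : HSp d T) :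
    ‖v‖ ≤ (2 + 2*(Real.sqrt T * C₀))^N * ‖v - c • Kop s t DB w v‖ := by
  have hδ0 : 0 ≤ T/N := le_of_lt (div_pos hT (by exact_mod_cast hN))
  refine rec_estimate hT hN v (v - c • Kop s t DB w v) (c • Kop s t DB w v)
    (by abel) (Real.sqrt T * C₀) (Real.sqrt (T/N) * C₀)
    (mul_nonneg (Real.sqrt_nonneg _) hC₀) (mul_nonneg (Real.sqrt_nonneg _) hC₀) hδ ?_
  intro i hi
  have hiN : (i:ℝ) + 1 ≤ (N:ℝ) := by exact_mod_cast Nat.succ_le_of_lt hi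
  set a := (i:ℝ) * (T/N) with ha
  set b := ((i:ℝ)+1) * (T/N) with hb
  have hab : a ≤ b := by
    rw [ha, hb]
    exact mul_le_mul_of_nonneg_right (by linarith) hδ0
  have hbT : b ≤ T := by
    rw [hb]
    calc ((i:ℝ)+1) * (T/N) ≤ (N:ℝ) * (T/N) := mul_le_mul_of_nonneg_right hiN hδ0
      _ = T := by field_simp
  have haT : a ≤ T := le_trans hab hbT
  have hba : b - a = T/N := by rw [ha, hb]; ring
  have hsplit : cutL b (c • Kop s t DB w v)
      = c • (cutL b (Kop s t DB w (cutL a v)) + cutL b (Kop s t DB w (cutL b v - cutL a v))) := by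
    rw [_root_.map_smul]
    congr 1
    rw [← map_add, ← map_add, add_sub_cancel]
    exact kop_causal s t hB2 hbT w v
  calc ‖cutL b (c • Kop s t DB w v)‖
      = ‖c‖ * ‖cutL b (Kop s t DB w (cutL a v)) + cutL b (Kop s t DB w (cutL b v - cutL a v))‖ := by
        rw [hsplit, norm_smul]
    _ ≤ ‖cutL b (Kop s t DB w (cutL a v))‖ + ‖cutL b (Kop s t DB w (cutL b v - cutL a v))‖ := by
        have h := norm_add_le (cutL b (Kop s t DB w (cutL a v)))
          (cutL b (Kop s t DB w (cutL b v - cutL a v)))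
        have hc' : ‖c‖ ≤ 1 := by rwa [Real.norm_eq_abs]
        nlinarith [norm_nonneg (cutL b (Kop s t DB w (cutL a v)) +
          cutL b (Kop s t DB w (cutL b v - cutL a v))), norm_nonneg c,
          norm_nonneg (cutL b (Kop s t DB w (cutL a v))),
          norm_nonneg (cutL b (Kop s t DB w (cutL b v - cutL a v)))]
    _ ≤ (Real.sqrt T * C₀) * ‖cutL a v‖ + (Real.sqrt (T/N) * C₀) * ‖cutL b v‖ := by
        refine add_le_add ?_ ?_
        · exact le_trans (norm_cutL_le _ _) (kop_norm s t hB2 h0s hst htT hC₀ w _)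
        · have h1 := kop_local s t hB2 hab haT hC₀ w _ (vanishBelow_cutL_sub hab v)
          rw [hba] at h1
          refine le_trans h1 ?_
          exact mul_le_mul_of_nonneg_left (norm_cutL_sub_le hab v)
            (mul_nonneg (Real.sqrt_nonneg _) hC₀)

/-- abstract inversion from the uniform family estimate. -/
lemma isUnit_one_sub_of_est {A : HSp d T →L[ℝ] HSp d T} {C : ℝ} (hC : 1 ≤ C)
    (hb : ∀ c : ℝ, |c| ≤ 1 → ∀ v : HSp d T, ‖v‖ ≤ C * ‖v - c • A v‖) :
    IsUnit ((1 : HSp d T →L[ℝ] HSp d T) - A) := by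
  set n : ℕ := ⌈C * ‖A‖⌉₊ + 1 with hn
  have hn0 : 0 < n := Nat.succ_pos _
  have hnR : 0 < (n:ℝ) := by exact_mod_cast hn0
  have hlt : C * ‖A‖ < (n:ℝ) := by
    calc C * ‖A‖ ≤ (⌈C * ‖A‖⌉₊ : ℝ) := Nat.le_ceil _
      _ < (n:ℝ) := by exact_mod_cast Nat.lt_succ_self _
  have key : ∀ k : ℕ, k ≤ n → IsUnit ((1 : HSp d T →L[ℝ] HSp d T) - ((k:ℝ)/(n:ℝ)) • A) := by
    intro k
    induction k with
    | zero => intro _; simp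
    | succ k ih =>
      intro hk
      have hkn : k ≤ n := Nat.le_of_succ_le hk
      have hu := ih hkn
      set u := hu.unit with hudef
      have hcoe : (u : HSp d T →L[ℝ] HSp d T) = 1 - ((k:ℝ)/(n:ℝ)) • A := hu.unit_spec
      have hfrac : |((k:ℝ)/(n:ℝ))| ≤ 1 := by
        rw [abs_of_nonneg (div_nonneg (by positivity) hnR.le)]
        rw [div_le_one hnR]
        exact_mod_cast hkn
      have hinv : ∀ y : HSp d T, ‖(↑u⁻¹ : HSp d T →L[ℝ] HSp d T) y‖ ≤ C * ‖y‖ := by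
        intro y
        have h1 := hb ((k:ℝ)/(n:ℝ)) hfrac ((↑u⁻¹ : HSp d T →L[ℝ] HSp d T) y)
        have h2 : (↑u⁻¹ : HSp d T →L[ℝ] HSp d T) y
            - ((k:ℝ)/(n:ℝ)) • A ((↑u⁻¹ : HSp d T →L[ℝ] HSp d T) y)
            = ((u : HSp d T →L[ℝ] HSp d T) * (↑u⁻¹ : HSp d T →L[ℝ] HSp d T)) y := by
          rw [ContinuousLinearMap.mul_apply, hcoe]
          simp [ContinuousLinearMap.sub_apply]
        rw [h2, u.mul_inv] at h1
        simpa using h1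
      have hsmall : ‖(↑u⁻¹ : HSp d T →L[ℝ] HSp d T) * ((1/(n:ℝ)) • A)‖ < 1 := by
        have hop : ‖(↑u⁻¹ : HSp d T →L[ℝ] HSp d T) * ((1/(n:ℝ)) • A)‖
            ≤ C * (1/(n:ℝ)) * ‖A‖ := by
          refine ContinuousLinearMap.opNorm_le_bound _ (by positivity) fun x => ?_
          rw [ContinuousLinearMap.mul_apply]
          calc ‖(↑u⁻¹ : HSp d T →L[ℝ] HSp d T) (((1/(n:ℝ)) • A) x)‖
              ≤ C * ‖((1/(n:ℝ)) • A) x‖ := hinv _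
            _ ≤ C * (1/(n:ℝ)) * ‖A‖ * ‖x‖ := by
                rw [ContinuousLinearMap.smul_apply, norm_smul]
                have := A.le_opNorm x
                have hC0 : 0 ≤ C := le_trans zero_le_one hC
                rw [Real.norm_eq_abs, abs_of_nonneg (by positivity : (0:ℝ) ≤ 1/(n:ℝ))]
                nlinarith [norm_nonneg (A x), norm_nonneg x, norm_nonneg A,
                  mul_le_mul_of_nonneg_left this
                    (by positivity : (0:ℝ) ≤ C * (1/(n:ℝ)))]
        refine lt_of_le_of_lt hop ?_
        calc C * (1/(n:ℝ)) * ‖A‖ = (C * ‖A‖) / n := by ring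
          _ < 1 := (div_lt_one hnR).2 hlt
      refine ⟨u * Units.oneSub _ hsmall, ?_⟩
      rw [Units.val_mul, Units.val_oneSub, mul_sub, mul_one, ← mul_assoc, u.mul_inv,
        one_mul, hcoe]
      have hkk : (((k+1:ℕ)):ℝ)/(n:ℝ) = (k:ℝ)/(n:ℝ) + 1/(n:ℝ) := by push_cast; ring
      rw [hkk, add_smul, ← sub_sub]
  have h := key n le_rfl
  rwa [div_self (ne_of_gt hnR), one_smul] at h

lemma lp_eq_of_ae {s t : ℝ} (h0s : 0 ≤ s) (htT : t ≤ T) (w ψ : HSp d T) (F : HTen d T)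
    (h : ∀ᵐ ξ ∂fracMeas T,
      (w : ℝ → EuclideanSpace ℝ (Fin d)) ξ =
        (ψ : ℝ → EuclideanSpace ℝ (Fin d)) ξ +
          ∫ r in Set.Ioc s t, (F : ℝ × ℝ → EuclideanSpace ℝ (Fin d)) (r, ξ)) :
    w = ψ + ViL s t F := by
  refine Lp.ext ?_
  filter_upwards [h, Lp.coeFn_add ψ (ViL s t F), coe_ViL s t F] with ξ h1 h2 h3
  rw [h1, h2, Pi.add_apply, h3, Jfun_eq_volume s t h0s htT F ξ]

lemma ae_of_lp_eq {s t : ℝ} (h0s : 0 ≤ s) (htT : t ≤ T) (w ψ : HSp d T) (F : HTen d T)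
    (h : w = ψ + ViL s t F) :
    ∀ᵐ ξ ∂fracMeas T,
      (w : ℝ → EuclideanSpace ℝ (Fin d)) ξ =
        (ψ : ℝ → EuclideanSpace ℝ (Fin d)) ξ +
          ∫ r in Set.Ioc s t, (F : ℝ × ℝ → EuclideanSpace ℝ (Fin d)) (r, ξ) := by
  filter_upwards [Lp.coeFn_add ψ (ViL s t F), coe_ViL s t F] with ξ h2 h3
  rw [h, h2, Pi.add_apply, h3, Jfun_eq_volume s t h0s htT F ξ]

lemma agree_blend (b : ℝ) (f u : HSp d T) :
    ∀ᵐ ξ ∂fracMeas T, ξ < b →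
      ((f + cutL b u : HSp d T) : ℝ → EuclideanSpace ℝ (Fin d)) ξ =
      ((f + u : HSp d T) : ℝ → EuclideanSpace ℝ (Fin d)) ξ := by
  filter_upwards [Lp.coeFn_add f (cutL b u), Lp.coeFn_add f u, cutL_coe b u]
    with ξ h1 h2 h3 hξ
  rw [h1, h2, Pi.add_apply, Pi.add_apply, h3, Set.indicator_of_mem (Set.mem_Iio.2 hξ)]

lemma agree_blend2 {a b : ℝ} (hab : a ≤ b) (f u : HSp d T) :
    ∀ᵐ ξ ∂fracMeas T, ξ < a →
      ((f + cutL a u : HSp d T) : ℝ → EuclideanSpace ℝ (Fin d)) ξ =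
      ((f + cutL b u : HSp d T) : ℝ → EuclideanSpace ℝ (Fin d)) ξ := by
  filter_upwards [Lp.coeFn_add f (cutL a u), Lp.coeFn_add f (cutL b u), cutL_coe a u,
    cutL_coe b u] with ξ h1 h2 h3 h4 hξ
  rw [h1, h2, Pi.add_apply, Pi.add_apply, h3, h4,
    Set.indicator_of_mem (Set.mem_Iio.2 hξ), Set.indicator_of_mem (Set.mem_Iio.2 (hξ.trans_le hab))]

/-- Lipschitz stability of solutions of `E(s,t,·)`. -/
lemma s_lipschitz (hT : 0 < T) (hB1 : AssumptionB1 d T B C₀) (hC₀ : 0 ≤ C₀)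
    {N : ℕ} (hN : 0 < N) (hδ : Real.sqrt (T/N) * C₀ ≤ 1/2)
    {s t : ℝ} (h0s : 0 ≤ s) (hst : s ≤ t) (htT : t ≤ T)
    (w₁ w₂ ψ₁ ψ₂ : HSp d T)
    (hw₁ : w₁ = ψ₁ + ViL s t (B w₁)) (hw₂ : w₂ = ψ₂ + ViL s t (B w₂)) :
    ‖w₁ - w₂‖ ≤ (2 + 2*(Real.sqrt T * C₀))^N * ‖ψ₁ - ψ₂‖ := by
  have hδ0 : 0 ≤ T/N := le_of_lt (div_pos hT (by exact_mod_cast hN))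
  refine rec_estimate hT hN (w₁ - w₂) (ψ₁ - ψ₂) (ViL s t (B w₁ - B w₂))
    ?_ (Real.sqrt T * C₀) (Real.sqrt (T/N) * C₀)
    (mul_nonneg (Real.sqrt_nonneg _) hC₀) (mul_nonneg (Real.sqrt_nonneg _) hC₀) hδ ?_
  · have hid : w₁ - w₂ = (ψ₁ + ViL s t (B w₁)) - (ψ₂ + ViL s t (B w₂)) := by
      conv_lhs => rw [hw₁, hw₂]
    rw [map_sub, hid]
    abel
  intro i hi
  have hiN : (i:ℝ) + 1 ≤ (N:ℝ) := by exact_mod_cast Nat.succ_le_of_lt hi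
  set a := (i:ℝ) * (T/N) with ha
  set b := ((i:ℝ)+1) * (T/N) with hb
  have hab : a ≤ b := by
    rw [ha, hb]; exact mul_le_mul_of_nonneg_right (by linarith) hδ0
  have hbT : b ≤ T := by
    rw [hb]
    calc ((i:ℝ)+1) * (T/N) ≤ (N:ℝ) * (T/N) := mul_le_mul_of_nonneg_right hiN hδ0
      _ = T := by field_simp
  have haT : a ≤ T := le_trans hab hbT
  have hba : b - a = T/N := by rw [ha, hb]; ring
  set v := w₁ - w₂ with hv
  set u := w₂ - w₁ with hu
  set wa := w₁ + cutL a u with hwa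
  set wb := w₁ + cutL b u with hwb
  have hdecomp : B w₁ - B w₂ = (B w₁ - B wa) + (B wa - B wb) + (B wb - B w₂) := by abel
  have hsplit : cutL b (ViL s t (B w₁ - B w₂))
      = cutL b (ViL s t (B w₁ - B wa)) + cutL b (ViL s t (B wa - B wb))
        + cutL b (ViL s t (B wb - B w₂)) := by
    rw [hdecomp, map_add, map_add, map_add, map_add]
  have hthird : cutL b (ViL s t (B wb - B w₂)) = 0 := by
    refine cutL_ViL_zero s t (tvolterra_sub (hB1.volterra _) (hB1.volterra _)) ?_
    refine tvanish_B_sub hB1 hbT wb w₂ ?_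
    have hfu : w₁ + u = w₂ := by rw [hu]; abel
    filter_upwards [agree_blend b w₁ u] with ξ hξ hξb
    rw [hwb, hξ hξb, hfu]
  have hsecond : ‖cutL b (ViL s t (B wa - B wb))‖
      ≤ (Real.sqrt (T/N) * C₀) * ‖cutL b v‖ := by
    have h1 : ‖cutL b (ViL s t (B wa - B wb))‖ ≤ Real.sqrt (b - a) * ‖B wa - B wb‖ := by
      refine norm_cutL_ViL_le s t hab (tvolterra_sub (hB1.volterra _) (hB1.volterra _)) ?_
      exact tvanish_B_sub hB1 haT wa wb (agree_blend2 hab w₁ u)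
    rw [hba] at h1
    refine le_trans h1 ?_
    rw [mul_assoc]
    refine mul_le_mul_of_nonneg_left ?_ (Real.sqrt_nonneg _)
    calc ‖B wa - B wb‖ ≤ C₀ * ‖wa - wb‖ := hB1.lipschitz wa wb
      _ ≤ C₀ * ‖cutL b v‖ := by
          refine mul_le_mul_of_nonneg_left ?_ hC₀
          have he : wa - wb = -(cutL b u - cutL a u) := by rw [hwa, hwb]; abel
          have he2 : cutL b u = -(cutL b v) := by
            rw [hu, hv, show w₂ - w₁ = -(w₁ - w₂) by abel, map_neg]
          rw [he, norm_neg]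
          calc ‖cutL b u - cutL a u‖ ≤ ‖cutL b u‖ := norm_cutL_sub_le hab u
            _ = ‖cutL b v‖ := by rw [he2, norm_neg]
  have hfirst : ‖cutL b (ViL s t (B w₁ - B wa))‖
      ≤ (Real.sqrt T * C₀) * ‖cutL a v‖ := by
    calc ‖cutL b (ViL s t (B w₁ - B wa))‖ ≤ ‖ViL s t (B w₁ - B wa)‖ := norm_cutL_le _ _
      _ ≤ Real.sqrt (max (t - s) 0) * ‖B w₁ - B wa‖ := norm_ViL_le s t _
      _ ≤ (Real.sqrt T * C₀) * ‖cutL a v‖ := by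
          have h2 : ‖B w₁ - B wa‖ ≤ C₀ * ‖cutL a v‖ := by
            calc ‖B w₁ - B wa‖ ≤ C₀ * ‖w₁ - wa‖ := hB1.lipschitz w₁ wa
              _ = C₀ * ‖cutL a v‖ := by
                  have : w₁ - wa = -(cutL a u) := by rw [hwa]; abel
                  rw [this, norm_neg, hu, hv, show w₂ - w₁ = -(w₁ - w₂) by abel,
                    map_neg, norm_neg]
          have h3 : Real.sqrt (max (t - s) 0) ≤ Real.sqrt T :=
            Real.sqrt_le_sqrt (max_le (by linarith) (by linarith))
          rw [mul_assoc]
          refine mul_le_mul h3 h2 (norm_nonneg _) (Real.sqrt_nonneg _)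
          |>.trans_eq (by ring)
  calc ‖cutL b (ViL s t (B w₁ - B w₂))‖
      ≤ ‖cutL b (ViL s t (B w₁ - B wa))‖ + ‖cutL b (ViL s t (B wa - B wb))‖ := by
        rw [hsplit, hthird, add_zero]
        exact norm_add_le _ _
    _ ≤ (Real.sqrt T * C₀) * ‖cutL a v‖ + (Real.sqrt (T/N) * C₀) * ‖cutL b v‖ :=
        add_le_add hfirst hsecond

/-- Taylor estimate for `B`. -/
lemma taylor_B (hB2 : AssumptionB2 d T B DB C₀ γ) (hC₀ : 0 ≤ C₀) (hγ0 : 0 < γ)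
    (w w' : HSp d T) :
    ‖B w' - B w - DB w (w' - w)‖ ≤ (C₀ * ‖w' - w‖ ^ γ) * ‖w' - w‖ := by
  refine Convex.norm_image_sub_le_of_norm_hasFDerivWithin_le' (𝕜 := ℝ)
    (f := B) (f' := DB) (φ := DB w) (s := segment ℝ w w')
    (fun z _ => (hB2.deriv z).hasFDerivWithinAt) ?_ (convex_segment _ _)
    (left_mem_segment _ _ _) (right_mem_segment _ _ _)
  intro z hz
  have hz' : ‖z - w‖ ≤ ‖w' - w‖ := by
    obtain ⟨θ1, θ2, h1, h2, hsum, rfl⟩ := hz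
    have hzz : θ1 • w + θ2 • w' - w = θ2 • (w' - w) := by
      have hθ : θ1 = 1 - θ2 := by linarith
      rw [hθ, sub_smul, one_smul, smul_sub]
      abel
    rw [hzz, norm_smul, Real.norm_eq_abs, abs_of_nonneg h2]
    nlinarith [norm_nonneg (w' - w)]
  calc ‖DB z - DB w‖ ≤ C₀ * ‖z - w‖ ^ γ := hB2.holder z w
    _ ≤ C₀ * ‖w' - w‖ ^ γ := by
        refine mul_le_mul_of_nonneg_left ?_ hC₀
        exact Real.rpow_le_rpow (norm_nonneg _) hz' hγ0.le

end EST

end St10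

/-- Under Assumptions (B1) and (B2), the solution map `S_{s,t} : H → H` of the
Volterra fixed-point equation is Fréchet differentiable; the derivative `DS_{s,t}(ψ)η` is the
unique solution of the linearized equation; and there is a constant `C₂ > 0`, depending only on
`C₀` and `T`, with `‖DS_{s,t}(ψ)η‖ ≤ C₂‖η‖` and
`‖DS_{s,t}(ψ₁)η − DS_{s,t}(ψ₂)η‖ ≤ C₂‖S_{s,t}(ψ₁) − S_{s,t}(ψ₂)‖^γ ‖η‖`. In particular,
`ψ ↦ DS_{s,t}(ψ)` is `γ`-Hölder continuous from `H` to `ℒ(H;H)`. -/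
theorem statement10 (d : ℕ) (hd : 1 ≤ d) (T : ℝ) (hT : 0 < T)
    (B : HSp d T → HTen d T) (C₀ γ : ℝ) (hC₀ : 0 < C₀) (hγ0 : 0 < γ) (hγ1 : γ ≤ 1)
    (hB1 : AssumptionB1 d T B C₀)
    (DB : HSp d T → HSp d T →L[ℝ] HTen d T)
    (hB2 : AssumptionB2 d T B DB C₀ γ)
    (S : ℝ → ℝ → HSp d T → HSp d T)
    (hS : ∀ s t : ℝ, 0 ≤ s → s ≤ t → t ≤ T →
      ∀ ψ : HSp d T, SolvesE d T B s t ψ (S s t ψ)) :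
    ∃ C₂ : ℝ, 0 < C₂ ∧
      ∀ s t : ℝ, 0 ≤ s → s ≤ t → t ≤ T →
        ∃ DS : HSp d T → HSp d T →L[ℝ] HSp d T,
          (∀ ψ : HSp d T, HasFDerivAt (S s t) (DS ψ) ψ) ∧
          (∀ ψ η : HSp d T, SolvesLinE d T DB s t (S s t ψ) η (DS ψ η)) ∧
          (∀ ψ η v : HSp d T, SolvesLinE d T DB s t (S s t ψ) η v → v = DS ψ η) ∧
          (∀ ψ η : HSp d T, ‖DS ψ η‖ ≤ C₂ * ‖η‖) ∧
          (∀ ψ₁ ψ₂ η : HSp d T,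
            ‖DS ψ₁ η - DS ψ₂ η‖ ≤ C₂ * ‖S s t ψ₁ - S s t ψ₂‖ ^ γ * ‖η‖) ∧
          (∃ C₄ : ℝ, 0 < C₄ ∧ ∀ ψ₁ ψ₂ : HSp d T,
            ‖DS ψ₁ - DS ψ₂‖ ≤ C₄ * ‖ψ₁ - ψ₂‖ ^ γ) := by
    classical
  have hC₀' : 0 ≤ C₀ := hC₀.le
  set N : ℕ := ⌈4*C₀^2*T⌉₊ + 1 with hNdef
  have hN : 0 < N := Nat.succ_pos _
  have hNR : 0 < (N:ℝ) := by exact_mod_cast hN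
  have hδ : Real.sqrt (T/N) * C₀ ≤ 1/2 := by
    have h1 : 4*C₀^2*T ≤ (N:ℝ) := by
      refine le_trans (Nat.le_ceil _) ?_
      exact_mod_cast Nat.le_succ _
    have h2 : T/(N:ℝ) ≤ 1/(4*C₀^2) := by
      rw [div_le_div_iff₀ hNR (by positivity)]
      nlinarith
    have h3 : Real.sqrt (T/N) ≤ Real.sqrt (1/(4*C₀^2)) := Real.sqrt_le_sqrt h2
    have h4 : Real.sqrt (1/(4*C₀^2)) = 1/(2*C₀) := by
      rw [show (1/(4*C₀^2)) = (1/(2*C₀))^2 by field_simp; ring]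
      exact Real.sqrt_sq (by positivity)
    rw [h4] at h3
    calc Real.sqrt (T/N) * C₀ ≤ (1/(2*C₀)) * C₀ := mul_le_mul_of_nonneg_right h3 hC₀'
      _ = 1/2 := by field_simp
  set CA := Real.sqrt T * C₀ with hCA
  have hCA0 : 0 ≤ CA := mul_nonneg (Real.sqrt_nonneg _) hC₀'
  set Cest := (2 + 2*CA)^N with hCest
  have hCest1 : (1:ℝ) ≤ Cest := one_le_pow₀ (by linarith)
  have hCest0 : 0 < Cest := lt_of_lt_of_le one_pos hCest1
  have hsT0 : 0 ≤ Real.sqrt T := Real.sqrt_nonneg T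
  set C₂ := Cest + Cest^2 * Real.sqrt T * C₀ with hC₂def
  have hC₂a : Cest ≤ C₂ := by nlinarith
  have hC₂b : Cest^2 * Real.sqrt T * C₀ ≤ C₂ := by nlinarith
  have hC₂pos : 0 < C₂ := lt_of_lt_of_le hCest0 hC₂a
  refine ⟨C₂, hC₂pos, ?_⟩
  intro s t h0s hst htT
  have hbound : ∀ w : HSp d T, ∀ c : ℝ, |c| ≤ 1 → ∀ v : HSp d T,
      ‖v‖ ≤ Cest * ‖v - c • St10.Kop s t DB w v‖ :=
    fun w c hc v => St10.kop_est hT hB2 hC₀' hN hδ h0s hst htT w c hc v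
  have hunit : ∀ w : HSp d T, IsUnit ((1 : HSp d T →L[ℝ] HSp d T) - St10.Kop s t DB w) :=
    fun w => St10.isUnit_one_sub_of_est hCest1 (hbound w)
  set R : HSp d T → (HSp d T →L[ℝ] HSp d T) := fun w => ↑(hunit w).unit⁻¹ with hRdef
  have hRid : ∀ w η : HSp d T, R w η - St10.Kop s t DB w (R w η) = η := by
    intro w η
    have h2 : (((hunit w).unit : HSp d T →L[ℝ] HSp d T) *
        (↑(hunit w).unit⁻¹ : HSp d T →L[ℝ] HSp d T)) η = η := by
      rw [Units.mul_inv]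
      rfl
    rw [(hunit w).unit_spec] at h2
    rw [ContinuousLinearMap.mul_apply, ContinuousLinearMap.sub_apply,
      ContinuousLinearMap.one_apply] at h2
    exact h2
  have hRuniq : ∀ w v η : HSp d T, v - St10.Kop s t DB w v = η → v = R w η := by
    intro w v η hv
    have h2 : ((↑(hunit w).unit⁻¹ : HSp d T →L[ℝ] HSp d T) *
        ((hunit w).unit : HSp d T →L[ℝ] HSp d T)) v = v := by
      rw [Units.inv_mul]
      rfl
    rw [ContinuousLinearMap.mul_apply] at h2
    have h3 : ((hunit w).unit : HSp d T →L[ℝ] HSp d T) v = η := by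
      rw [(hunit w).unit_spec, ContinuousLinearMap.sub_apply, ContinuousLinearMap.one_apply]
      exact hv
    rw [h3] at h2
    exact h2.symm
  have hRbound : ∀ w η : HSp d T, ‖R w η‖ ≤ Cest * ‖η‖ := by
    intro w η
    have h := hbound w 1 (by norm_num) (R w η)
    rwa [one_smul, hRid w η] at h
  have hKdiff : ∀ w₁ w₂ x : HSp d T,
      ‖St10.Kop s t DB w₁ x - St10.Kop s t DB w₂ x‖
        ≤ Real.sqrt T * (C₀ * ‖w₁ - w₂‖ ^ γ) * ‖x‖ := by
    intro w₁ w₂ x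
    have h1 : St10.Kop s t DB w₁ x - St10.Kop s t DB w₂ x
        = St10.ViL s t (DB w₁ x - DB w₂ x) := (map_sub (St10.ViL s t) _ _).symm
    rw [h1]
    calc ‖St10.ViL s t (DB w₁ x - DB w₂ x)‖
        ≤ Real.sqrt (max (t-s) 0) * ‖DB w₁ x - DB w₂ x‖ := St10.norm_ViL_le s t _
      _ ≤ Real.sqrt T * (C₀ * ‖w₁ - w₂‖ ^ γ * ‖x‖) := by
          refine mul_le_mul (Real.sqrt_le_sqrt (max_le (by linarith) (by linarith))) ?_
            (norm_nonneg _) hsT0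
          calc ‖DB w₁ x - DB w₂ x‖ = ‖(DB w₁ - DB w₂) x‖ := by
                rw [ContinuousLinearMap.sub_apply]
            _ ≤ ‖DB w₁ - DB w₂‖ * ‖x‖ := (DB w₁ - DB w₂).le_opNorm x
            _ ≤ C₀ * ‖w₁ - w₂‖ ^ γ * ‖x‖ :=
                mul_le_mul_of_nonneg_right (hB2.holder w₁ w₂) (norm_nonneg _)
      _ = Real.sqrt T * (C₀ * ‖w₁ - w₂‖ ^ γ) * ‖x‖ := by ring
  have hRdiff : ∀ w₁ w₂ η : HSp d T,
      ‖R w₁ η - R w₂ η‖ ≤ Cest^2 * Real.sqrt T * C₀ * ‖w₁ - w₂‖ ^ γ * ‖η‖ := by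
    intro w₁ w₂ η
    have hy : R w₂ η - St10.Kop s t DB w₂ (R w₂ η) = η := hRid w₂ η
    have h1 : R w₁ η - St10.Kop s t DB w₁ (R w₁ η) = η := hRid w₁ η
    have hz : R w₁ η - R w₂ η
        = R w₁ (St10.Kop s t DB w₁ (R w₂ η) - St10.Kop s t DB w₂ (R w₂ η)) := by
      refine hRuniq w₁ _ _ ?_
      rw [map_sub]
      calc (R w₁ η - R w₂ η) - (St10.Kop s t DB w₁ (R w₁ η) - St10.Kop s t DB w₁ (R w₂ η))
          = (R w₁ η - St10.Kop s t DB w₁ (R w₁ η))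
            - (R w₂ η - St10.Kop s t DB w₂ (R w₂ η))
            + (St10.Kop s t DB w₁ (R w₂ η) - St10.Kop s t DB w₂ (R w₂ η)) := by abel
        _ = η - η + (St10.Kop s t DB w₁ (R w₂ η) - St10.Kop s t DB w₂ (R w₂ η)) := by
            rw [h1, hy]
        _ = St10.Kop s t DB w₁ (R w₂ η) - St10.Kop s t DB w₂ (R w₂ η) := by abel
    rw [hz]
    have hrpow0 : (0:ℝ) ≤ ‖w₁ - w₂‖ ^ γ := Real.rpow_nonneg (norm_nonneg _) γ
    calc ‖R w₁ (St10.Kop s t DB w₁ (R w₂ η) - St10.Kop s t DB w₂ (R w₂ η))‖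
        ≤ Cest * ‖St10.Kop s t DB w₁ (R w₂ η) - St10.Kop s t DB w₂ (R w₂ η)‖ :=
          hRbound w₁ _
      _ ≤ Cest * (Real.sqrt T * (C₀ * ‖w₁ - w₂‖ ^ γ) * ‖R w₂ η‖) :=
          mul_le_mul_of_nonneg_left (hKdiff w₁ w₂ _) hCest0.le
      _ ≤ Cest * (Real.sqrt T * (C₀ * ‖w₁ - w₂‖ ^ γ) * (Cest * ‖η‖)) := by
          refine mul_le_mul_of_nonneg_left ?_ hCest0.le
          exact mul_le_mul_of_nonneg_left (hRbound w₂ η) (by positivity)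
      _ = Cest^2 * Real.sqrt T * C₀ * ‖w₁ - w₂‖ ^ γ * ‖η‖ := by ring
  have hSolve : ∀ ψ : HSp d T, S s t ψ = ψ + St10.ViL s t (B (S s t ψ)) :=
    fun ψ => St10.lp_eq_of_ae h0s htT _ _ _ (hS s t h0s hst htT ψ)
  have hlip : ∀ ψ₁ ψ₂ : HSp d T, ‖S s t ψ₁ - S s t ψ₂‖ ≤ Cest * ‖ψ₁ - ψ₂‖ :=
    fun ψ₁ ψ₂ => St10.s_lipschitz hT hB1 hC₀' hN hδ h0s hst htT _ _ _ _
      (hSolve ψ₁) (hSolve ψ₂)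
  have hHol : ∀ ψ₁ ψ₂ η : HSp d T,
      ‖R (S s t ψ₁) η - R (S s t ψ₂) η‖ ≤ C₂ * ‖S s t ψ₁ - S s t ψ₂‖ ^ γ * ‖η‖ := by
    intro ψ₁ ψ₂ η
    refine le_trans (hRdiff _ _ η) ?_
    have h0 : (0:ℝ) ≤ ‖S s t ψ₁ - S s t ψ₂‖ ^ γ := Real.rpow_nonneg (norm_nonneg _) γ
    have := mul_le_mul_of_nonneg_right hC₂b h0
    nlinarith [norm_nonneg η, mul_le_mul_of_nonneg_right
      (mul_le_mul_of_nonneg_right hC₂b h0) (norm_nonneg η)]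
  refine ⟨fun ψ => R (S s t ψ), ?_, ?_, ?_, ?_, ?_, ?_⟩
  · -- differentiability
    intro ψ
    rw [hasFDerivAt_iff_isLittleO_nhds_zero]
    set Cκ := Cest * (Real.sqrt T * C₀) * Cest^γ * Cest with hCκ
    have hCκ0 : 0 ≤ Cκ := by positivity
    have hrem : ∀ η : HSp d T,
        ‖S s t (ψ + η) - S s t ψ - R (S s t ψ) η‖ ≤ Cκ * ‖η‖ ^ γ * ‖η‖ := by
      intro η
      set w := S s t ψ with hwdef
      set w' := S s t (ψ + η) with hw'def
      set v := R w η with hvdef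
      have hVid : v - St10.Kop s t DB w v = η := hRid w η
      set rem : HTen d T := B w' - B w - DB w (w' - w) with hremdef
      have hρeq : (w' - w - v) - St10.Kop s t DB w (w' - w - v) = St10.ViL s t rem := by
        have e1 : St10.Kop s t DB w (w' - w - v)
            = St10.ViL s t (DB w (w' - w)) - St10.ViL s t (DB w v) := by
          have hDB : DB w (w' - w - v) = DB w (w' - w) - DB w v := map_sub _ _ _
          rw [show St10.Kop s t DB w (w' - w - v)
            = St10.ViL s t (DB w (w' - w - v)) from rfl, hDB, map_sub]
        have e2 : St10.ViL s t rem = St10.ViL s t (B w') - St10.ViL s t (B w)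
            - St10.ViL s t (DB w (w' - w)) := by
          rw [hremdef, map_sub, map_sub]
        have h5 : w' - w = η + (St10.ViL s t (B w') - St10.ViL s t (B w)) := by
          conv_lhs => rw [show w' = (ψ + η) + St10.ViL s t (B w') from hSolve (ψ + η),
            show w = ψ + St10.ViL s t (B w) from hSolve ψ]
          abel
        have h7 : v - St10.ViL s t (DB w v) = η := hVid
        rw [e1, e2]
        calc (w' - w - v) - (St10.ViL s t (DB w (w' - w)) - St10.ViL s t (DB w v))
            = (w' - w) - (v - St10.ViL s t (DB w v)) - St10.ViL s t (DB w (w' - w)) := by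
              abel
          _ = (η + (St10.ViL s t (B w') - St10.ViL s t (B w))) - η
              - St10.ViL s t (DB w (w' - w)) := by rw [h5, h7]
          _ = St10.ViL s t (B w') - St10.ViL s t (B w)
              - St10.ViL s t (DB w (w' - w)) := by abel
      have hρ2 : w' - w - v = R w (St10.ViL s t rem) := hRuniq w _ _ hρeq
      have hwlip : ‖w' - w‖ ≤ Cest * ‖η‖ := by
        have h := hlip (ψ + η) ψ
        rwa [add_sub_cancel_left] at h
      have hrem2 : ‖rem‖ ≤ C₀ * (Cest * ‖η‖) ^ γ * (Cest * ‖η‖) := by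
        calc ‖rem‖ ≤ (C₀ * ‖w' - w‖ ^ γ) * ‖w' - w‖ :=
              St10.taylor_B hB2 hC₀' hγ0 w w'
          _ ≤ C₀ * (Cest * ‖η‖) ^ γ * (Cest * ‖η‖) := by
              have hm : ‖w' - w‖ ^ γ ≤ (Cest * ‖η‖) ^ γ :=
                Real.rpow_le_rpow (norm_nonneg _) hwlip hγ0.le
              have h1 : (0:ℝ) ≤ C₀ * ‖w' - w‖ ^ γ :=
                mul_nonneg hC₀' (Real.rpow_nonneg (norm_nonneg _) γ)
              refine mul_le_mul ?_ hwlip (norm_nonneg _) ?_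
              · exact mul_le_mul_of_nonneg_left hm hC₀'
              · positivity
      calc ‖w' - w - v‖ = ‖R w (St10.ViL s t rem)‖ := by rw [hρ2]
        _ ≤ Cest * ‖St10.ViL s t rem‖ := hRbound w _
        _ ≤ Cest * (Real.sqrt T * ‖rem‖) := by
            refine mul_le_mul_of_nonneg_left ?_ hCest0.le
            refine le_trans (St10.norm_ViL_le s t rem) ?_
            exact mul_le_mul_of_nonneg_right
              (Real.sqrt_le_sqrt (max_le (by linarith) (by linarith))) (norm_nonneg _)
        _ ≤ Cest * (Real.sqrt T * (C₀ * (Cest * ‖η‖) ^ γ * (Cest * ‖η‖))) := by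
            refine mul_le_mul_of_nonneg_left ?_ hCest0.le
            exact mul_le_mul_of_nonneg_left hrem2 hsT0
        _ = Cκ * ‖η‖ ^ γ * ‖η‖ := by
            rw [Real.mul_rpow hCest0.le (norm_nonneg _), hCκ]
            ring
    refine Asymptotics.isLittleO_iff.2 ?_
    intro c hc
    have htend : Filter.Tendsto (fun η : HSp d T => Cκ * ‖η‖ ^ γ) (nhds 0) (nhds 0) := by
      have h1 : Filter.Tendsto (fun η : HSp d T => ‖η‖) (nhds 0) (nhds 0) :=
        tendsto_norm_zero
      have h2 : Filter.Tendsto (fun x : ℝ => Cκ * x ^ γ) (nhds 0) (nhds (Cκ * (0:ℝ) ^ γ)) :=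
        (continuousAt_const.mul (Real.continuousAt_rpow_const 0 γ (Or.inr hγ0.le))).tendsto
      have h3 := h2.comp h1
      rw [Real.zero_rpow (ne_of_gt hγ0), mul_zero] at h3
      exact h3
    have hev : ∀ᶠ η in nhds (0 : HSp d T), Cκ * ‖η‖ ^ γ < c :=
      htend.eventually_lt_const hc
    filter_upwards [hev] with η hη
    calc ‖S s t (ψ + η) - S s t ψ - R (S s t ψ) η‖ ≤ Cκ * ‖η‖ ^ γ * ‖η‖ := hrem η
      _ ≤ c * ‖η‖ := mul_le_mul_of_nonneg_right hη.le (norm_nonneg _)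
  · -- solves the linearized equation
    intro ψ η
    have h := hRid (S s t ψ) η
    have h2 : R (S s t ψ) η = η + St10.ViL s t (DB (S s t ψ) (R (S s t ψ) η)) :=
      sub_eq_iff_eq_add.1 h
    exact St10.ae_of_lp_eq h0s htT _ _ _ h2
  · -- uniqueness
    intro ψ η v hv
    have h2 : v = η + St10.ViL s t (DB (S s t ψ) v) :=
      St10.lp_eq_of_ae h0s htT v η _ hv
    exact hRuniq (S s t ψ) v η (sub_eq_iff_eq_add.2 h2)
  · -- bound
    intro ψ η
    exact le_trans (hRbound _ η) (mul_le_mul_of_nonneg_right hC₂a (norm_nonneg η))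
  · -- Hölder in S
    exact hHol
  · -- Hölder in ψ on operator norms
    refine ⟨C₂ * Cest, by positivity, ?_⟩
    intro ψ₁ ψ₂
    refine ContinuousLinearMap.opNorm_le_bound _ (by positivity) fun η => ?_
    rw [ContinuousLinearMap.sub_apply]
    have hmono : ‖S s t ψ₁ - S s t ψ₂‖ ^ γ ≤ Cest * ‖ψ₁ - ψ₂‖ ^ γ := by
      calc ‖S s t ψ₁ - S s t ψ₂‖ ^ γ ≤ (Cest * ‖ψ₁ - ψ₂‖) ^ γ :=
            Real.rpow_le_rpow (norm_nonneg _) (hlip ψ₁ ψ₂) hγ0.le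
        _ = Cest ^ γ * ‖ψ₁ - ψ₂‖ ^ γ := Real.mul_rpow hCest0.le (norm_nonneg _)
        _ ≤ Cest * ‖ψ₁ - ψ₂‖ ^ γ := by
            refine mul_le_mul_of_nonneg_right ?_ (Real.rpow_nonneg (norm_nonneg _) γ)
            calc Cest ^ γ ≤ Cest ^ (1:ℝ) :=
                  Real.rpow_le_rpow_of_exponent_le hCest1 hγ1
              _ = Cest := Real.rpow_one Cest
    calc ‖R (S s t ψ₁) η - R (S s t ψ₂) η‖
        ≤ C₂ * ‖S s t ψ₁ - S s t ψ₂‖ ^ γ * ‖η‖ := hHol ψ₁ ψ₂ η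
      _ ≤ C₂ * (Cest * ‖ψ₁ - ψ₂‖ ^ γ) * ‖η‖ := by
          refine mul_le_mul_of_nonneg_right ?_ (norm_nonneg η)
          exact mul_le_mul_of_nonneg_left hmono hC₂pos.le
      _ = C₂ * Cest * ‖ψ₁ - ψ₂‖ ^ γ * ‖η‖ := by ring
end
end

section
/- Let a ≤ b be real numbers, α ∈ (0,1), and c : [a,b] → ℝ^d continuous. Define g : ℝ → ℝ^d by g(ξ) = ∫_a^{min(ξ,b)} (ξ−τ)^(α−1) c(τ) dτ for ξ > a and g(ξ) = 0 for ξ ≤ a. Then g is continuous on ℝ. -/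
open MeasureTheory intervalIntegral

/-- Continuity of a truncated Riemann–Liouville fractional integral: if
`c : [a,b] → ℝ^d` is continuous and `α ∈ (0,1)`, then `g(ξ) = ∫_a^{min(ξ,b)} (ξ−τ)^(α−1) c(τ) dτ`
for `ξ > a`, `g(ξ) = 0` for `ξ ≤ a`, defines a continuous function on `ℝ`. -/
theorem statement12 (d : ℕ) (hd : 1 ≤ d) (a b : ℝ) (hab : a ≤ b)
    (α : ℝ) (hα0 : 0 < α) (hα1 : α < 1)
    (c : ℝ → EuclideanSpace ℝ (Fin d)) (hc : ContinuousOn c (Set.Icc a b)) :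
    Continuous (fun ξ : ℝ =>
      if a < ξ then ∫ τ in a..(min ξ b), ((ξ - τ) ^ (α - 1)) • c τ else 0) := by
  have hr : (-1 : ℝ) < α - 1 := by linarith
  have hr0 : α - 1 ≤ 0 := by linarith
  -- continuous extension of `c` to all of `ℝ`
  set ct : ℝ → EuclideanSpace ℝ (Fin d) :=
      Set.IccExtend hab ((Set.Icc a b).restrict c) with hct
  have hctc : Continuous ct :=
    (continuousOn_iff_continuous_restrict.mp hc).Icc_extend'
  have hcteq : ∀ t ∈ Set.Icc a b, ct t = c t := by
    intro t ht
    simp [hct, Set.IccExtend_of_mem hab _ ht]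
    rfl
  -- uniform bound on `ct`
  obtain ⟨M, hM⟩ : ∃ M : ℝ, ∀ t, ‖ct t‖ ≤ M := by
    obtain ⟨M, hM⟩ := (isCompact_Icc (a := a) (b := b)).exists_bound_of_continuousOn
      (hctc.continuousOn)
    exact ⟨M, fun t => by
      have : ct t = ct (Set.projIcc a b hab t) := by
        simp [hct, Set.IccExtend, Set.restrict]
      rw [this]; exact hM _ (Set.projIcc a b hab t).2⟩
  have hM0 : 0 ≤ M := le_trans (norm_nonneg _) (hM a)
  -- the regularized family of kernels
  set F : ℝ → ℝ → ℝ → EuclideanSpace ℝ (Fin d) :=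
    fun η ξ τ => if τ ≤ ξ - η then ((ξ - τ) ^ (α - 1)) • ct τ else 0 with hF
  -- integrability of the kernel itself
  have kerInt : ∀ ξ u v : ℝ, IntervalIntegrable (fun τ => (ξ - τ) ^ (α - 1)) volume u v := by
    intro ξ u v
    have h := (intervalIntegrable_rpow' hr (a := ξ - u) (b := ξ - v)).comp_sub_left ξ
    simpa using h
  -- integrability of the smul integrand on any Ioc
  have smulInt : ∀ ξ u v : ℝ, IntegrableOn (fun τ => ((ξ - τ) ^ (α - 1)) • ct τ)
      (Set.Ioc u v) := by
    intro ξ u v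
    apply Integrable.mono' (g := fun τ => M * |(ξ - τ) ^ (α - 1)|)
      (((kerInt ξ u v).1.norm).const_mul M)
      ((kerInt ξ u v).1.aestronglyMeasurable.smul hctc.aestronglyMeasurable.restrict)
    refine Filter.Eventually.of_forall fun τ => ?_
    show ‖((ξ - τ) ^ (α - 1)) • ct τ‖ ≤ _
    rw [norm_smul, Real.norm_eq_abs, mul_comm]
    exact mul_le_mul_of_nonneg_right (hM τ) (abs_nonneg _)
  have intF : ∀ η ξ : ℝ, IntegrableOn (F η ξ) (Set.Ioc a b) := by
    intro η ξ
    have hi : F η ξ = Set.indicator (Set.Iic (ξ - η))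
        (fun τ => ((ξ - τ) ^ (α - 1)) • ct τ) := by
      funext τ
      by_cases h : τ ≤ ξ - η <;>
        simp [hF, h, Set.indicator_apply, Set.mem_Iic]
    rw [hi]
    exact (smulInt ξ a b).indicator measurableSet_Iic
  -- exact value of the model integral
  have calc1 : ∀ ξ η : ℝ, 0 < η →
      (∫ τ in Set.Ioc (ξ - η) ξ, (ξ - τ) ^ (α - 1)) = η ^ α / α := by
    intro ξ η hη
    rw [← intervalIntegral.integral_of_le (by linarith : ξ - η ≤ ξ),
      intervalIntegral.integral_comp_sub_left (fun s => s ^ (α - 1)) ξ]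
    simp only [sub_self, sub_sub_cancel]
    rw [integral_rpow (Or.inl hr)]
    have h1 : α - 1 + 1 = α := by ring
    rw [h1, Real.zero_rpow hα0.ne']
    ring
  -- uniform closeness of the regularized integrals to the original one
  have hdiff : ∀ η : ℝ, 0 < η → ∀ ξ : ℝ,
      ‖(∫ τ in Set.Ioc a b, F 0 ξ τ) - ∫ τ in Set.Ioc a b, F η ξ τ‖ ≤ M * (η ^ α / α) := by
    intro η hη ξ
    rw [← integral_sub (intF 0 ξ) (intF η ξ)]
    have hbd : ∀ τ : ℝ, ‖F 0 ξ τ - F η ξ τ‖ ≤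
        M * Set.indicator (Set.Ioc (ξ - η) ξ) (fun τ => (ξ - τ) ^ (α - 1)) τ := by
      intro τ
      simp only [hF, sub_zero]
      by_cases h1 : τ ≤ ξ - η
      · have h2 : τ ≤ ξ := by linarith
        have hni : τ ∉ Set.Ioc (ξ - η) ξ := fun hmem => absurd hmem.1 (not_lt.mpr h1)
        rw [if_pos h1, if_pos h2, sub_self, Set.indicator_of_notMem hni]
        simp
      · by_cases h2 : τ ≤ ξ
        · have hnn : (0:ℝ) ≤ (ξ - τ) ^ (α - 1) :=
            Real.rpow_nonneg (by linarith) _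
          have hmem : τ ∈ Set.Ioc (ξ - η) ξ := ⟨by linarith [not_le.mp h1], by linarith⟩
          rw [Set.indicator_of_mem hmem, if_pos h2, if_neg h1, sub_zero]
          rw [norm_smul, Real.norm_eq_abs, abs_of_nonneg hnn, mul_comm]
          exact mul_le_mul_of_nonneg_right (hM τ) hnn
        · have hni : τ ∉ Set.Ioc (ξ - η) ξ := fun hmem => absurd hmem.2 (by linarith [not_le.mp h2])
          rw [if_neg h1, if_neg h2, sub_self, Set.indicator_of_notMem hni]
          simp
    have hg : IntegrableOn (fun τ =>
        M * Set.indicator (Set.Ioc (ξ - η) ξ) (fun τ => (ξ - τ) ^ (α - 1)) τ)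
        (Set.Ioc a b) :=
      ((kerInt ξ a b).1.indicator measurableSet_Ioc).const_mul M
    calc ‖∫ τ in Set.Ioc a b, (F 0 ξ τ - F η ξ τ)‖
        ≤ ∫ τ in Set.Ioc a b,
            M * Set.indicator (Set.Ioc (ξ - η) ξ) (fun τ => (ξ - τ) ^ (α - 1)) τ :=
          norm_integral_le_of_norm_le hg (Filter.Eventually.of_forall hbd)
      _ = M * ∫ τ in Set.Ioc a b,
            Set.indicator (Set.Ioc (ξ - η) ξ) (fun τ => (ξ - τ) ^ (α - 1)) τ :=
          integral_const_mul M _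
      _ ≤ M * (η ^ α / α) := by
          apply mul_le_mul_of_nonneg_left _ hM0
          rw [setIntegral_indicator measurableSet_Ioc]
          calc (∫ τ in Set.Ioc a b ∩ Set.Ioc (ξ - η) ξ, (ξ - τ) ^ (α - 1))
              ≤ ∫ τ in Set.Ioc (ξ - η) ξ, (ξ - τ) ^ (α - 1) := by
                apply setIntegral_mono_set (kerInt ξ (ξ - η) ξ).1
                · exact (ae_restrict_iff' measurableSet_Ioc).2 (Filter.Eventually.of_forall
                    fun τ hτ => Real.rpow_nonneg (by linarith [hτ.2]) _)
                · exact (Set.inter_subset_right).eventuallyLE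
            _ = η ^ α / α := calc1 ξ η hη
  -- continuity of each regularized integral
  have contF : ∀ η : ℝ, 0 < η → Continuous (fun ξ => ∫ τ in Set.Ioc a b, F η ξ τ) := by
    intro η hη
    rw [continuous_iff_continuousAt]
    intro ξ₀
    apply continuousAt_of_dominated (bound := fun _ => η ^ (α - 1) * M)
    · exact Filter.Eventually.of_forall fun ξ => (intF η ξ).aestronglyMeasurable
    · refine Filter.Eventually.of_forall fun ξ => Filter.Eventually.of_forall fun τ => ?_
      by_cases h : τ ≤ ξ - η
      · simp only [hF, if_pos h]
        rw [norm_smul, Real.norm_eq_abs,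
          abs_of_nonneg (Real.rpow_nonneg (by linarith) _)]
        exact mul_le_mul (Real.rpow_le_rpow_of_nonpos hη (by linarith) hr0) (hM τ)
          (norm_nonneg _) (Real.rpow_nonneg hη.le _)
      · simp only [hF, if_neg h, norm_zero]
        exact mul_nonneg (Real.rpow_nonneg hη.le _) hM0
    · exact integrableOn_const measure_Ioc_lt_top.ne
    · have hne : ∀ᵐ τ ∂(volume.restrict (Set.Ioc a b)), τ ≠ ξ₀ - η := by
        apply ae_restrict_of_ae
        rw [ae_iff]
        have : {τ : ℝ | ¬ τ ≠ ξ₀ - η} = {ξ₀ - η} := by ext τ; simp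
        rw [this]
        exact Real.volume_singleton
      filter_upwards [hne] with τ hτ
      rcases lt_or_gt_of_ne hτ with hlt | hgt
      · -- τ < ξ₀ - η : eventually the `if` is true
        have hev : ∀ᶠ ξ in nhds ξ₀, τ + η < ξ := eventually_gt_nhds (by linarith)
        have hca : ContinuousAt (fun ξ : ℝ => ((ξ - τ) ^ (α - 1)) • ct τ) ξ₀ := by
          refine ContinuousAt.smul (f := fun ξ : ℝ => (ξ - τ) ^ (α - 1)) (g := fun _ => ct τ) ?_ continuousAt_const
          exact ContinuousAt.rpow_const
            ((continuous_id.sub continuous_const).continuousAt)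
            (Or.inl (show (0:ℝ) < ξ₀ - τ by simpa using by linarith).ne')
        apply hca.congr
        filter_upwards [hev] with ξ hξ
        simp [hF, if_pos (by linarith : τ ≤ ξ - η)]
      · -- τ > ξ₀ - η : eventually the `if` is false
        have hev : ∀ᶠ ξ in nhds ξ₀, ξ < τ + η := eventually_lt_nhds (by linarith)
        have heq : (fun ξ : ℝ => F η ξ τ) =ᶠ[nhds ξ₀]
            fun _ => (0 : EuclideanSpace ℝ (Fin d)) := by
          filter_upwards [hev] with ξ hξ
          simp [hF, if_neg (by linarith : ¬ τ ≤ ξ - η)]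
        exact continuousAt_const.congr heq.symm
  -- continuity of the limit
  have contG : Continuous (fun ξ => ∫ τ in Set.Ioc a b, F 0 ξ τ) := by
    rw [continuous_iff_continuousAt]
    intro ξ₀
    rw [Metric.continuousAt_iff]
    intro ε hε
    -- pick η with M * η^α / α < ε/3
    obtain ⟨η, hηb, hη⟩ : ∃ η : ℝ, M * (η ^ α / α) < ε / 3 ∧ 0 < η := by
      have ht : Filter.Tendsto (fun η : ℝ => M * (η ^ α / α)) (nhds 0)
          (nhds (M * ((0:ℝ) ^ α / α))) := by
        apply Filter.Tendsto.mul tendsto_const_nhds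
        exact Filter.Tendsto.div_const
          (Real.continuousAt_rpow_const 0 α (Or.inr hα0.le)) α
      rw [Real.zero_rpow hα0.ne', zero_div, mul_zero] at ht
      have hev : ∀ᶠ η : ℝ in nhds 0, M * (η ^ α / α) < ε / 3 :=
        ht.eventually (eventually_lt_nhds (by linarith))
      obtain ⟨η, hη1, hη2⟩ :=
        ((hev.filter_mono nhdsWithin_le_nhds).and self_mem_nhdsWithin).exists
          (f := nhdsWithin (0:ℝ) (Set.Ioi 0))
      exact ⟨η, hη1, hη2⟩
    obtain ⟨δ, hδ0, hδ⟩ := Metric.continuousAt_iff.mp ((contF η hη).continuousAt (x := ξ₀))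
      (ε / 3) (by linarith)
    refine ⟨δ, hδ0, fun {ξ} hξ => ?_⟩
    have h1 := hdiff η hη ξ
    have h2 := hdiff η hη ξ₀
    have h3 := hδ hξ
    rw [dist_eq_norm] at h3 ⊢
    calc ‖(∫ τ in Set.Ioc a b, F 0 ξ τ) - ∫ τ in Set.Ioc a b, F 0 ξ₀ τ‖
        ≤ ‖(∫ τ in Set.Ioc a b, F 0 ξ τ) - ∫ τ in Set.Ioc a b, F η ξ τ‖
          + ‖(∫ τ in Set.Ioc a b, F η ξ τ) - ∫ τ in Set.Ioc a b, F η ξ₀ τ‖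
          + ‖(∫ τ in Set.Ioc a b, F η ξ₀ τ) - ∫ τ in Set.Ioc a b, F 0 ξ₀ τ‖ := by
          have t4 := dist_triangle4 (∫ τ in Set.Ioc a b, F 0 ξ τ)
            (∫ τ in Set.Ioc a b, F η ξ τ) (∫ τ in Set.Ioc a b, F η ξ₀ τ)
            (∫ τ in Set.Ioc a b, F 0 ξ₀ τ)
          simpa only [dist_eq_norm] using t4
      _ < ε := by
          rw [norm_sub_rev (∫ τ in Set.Ioc a b, F η ξ₀ τ)]
          linarith
  -- identification of the original function with `G`
  have key : (fun ξ : ℝ =>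
      if a < ξ then ∫ τ in a..(min ξ b), ((ξ - τ) ^ (α - 1)) • c τ else 0)
      = fun ξ => ∫ τ in Set.Ioc a b, F 0 ξ τ := by
    funext ξ
    by_cases hξ : a < ξ
    · rw [if_pos hξ]
      have h1 : a ≤ min ξ b := le_min hξ.le hab
      rw [intervalIntegral.integral_of_le h1]
      have hi : ∀ τ : ℝ, F 0 ξ τ = Set.indicator (Set.Iic ξ)
          (fun τ => ((ξ - τ) ^ (α - 1)) • ct τ) τ := by
        intro τ
        by_cases h : τ ≤ ξ <;>
          simp [hF, h, Set.indicator_apply, Set.mem_Iic]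
      calc (∫ τ in Set.Ioc a (min ξ b), ((ξ - τ) ^ (α - 1)) • c τ)
          = ∫ τ in Set.Ioc a (min ξ b), ((ξ - τ) ^ (α - 1)) • ct τ := by
            apply setIntegral_congr_fun measurableSet_Ioc
            intro τ hτ
            show ((ξ - τ) ^ (α - 1)) • c τ = ((ξ - τ) ^ (α - 1)) • ct τ
            rw [hcteq τ ⟨hτ.1.le, hτ.2.trans (min_le_right _ _)⟩]
        _ = ∫ τ in Set.Ioc a b ∩ Set.Iic ξ, ((ξ - τ) ^ (α - 1)) • ct τ := by
            rw [Set.Ioc_inter_Iic, min_comm]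
        _ = ∫ τ in Set.Ioc a b, Set.indicator (Set.Iic ξ)
              (fun τ => ((ξ - τ) ^ (α - 1)) • ct τ) τ := by
            rw [setIntegral_indicator measurableSet_Iic]
        _ = ∫ τ in Set.Ioc a b, F 0 ξ τ := by
            exact setIntegral_congr_fun measurableSet_Ioc fun τ _ => (hi τ).symm
    · rw [if_neg hξ]
      symm
      rw [setIntegral_congr_fun measurableSet_Ioc
        (g := fun _ => (0 : EuclideanSpace ℝ (Fin d)))
        (fun τ hτ => by
          have : ¬ τ ≤ ξ := by
            push_neg at hξ ⊢
            linarith [hτ.1]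
          simp [hF, sub_zero, this])]
      exact integral_zero _ _
  rw [key]
  exact contG
end

section
/- Let 0 ≤ s < t ≤ T and v ∈ L²((0,T); ℝ^d). Define f : (0,T) → ℝ^d by f(ξ) = (1/Γ(α)²) ∫_{T−t}^{T−s} 1_{τ<ξ} (ξ−τ)^(α−1) · ( ∫_τ^T (η−τ)^(α−1) v(η) dη ) dτ. Then f(ξ) is well defined (the integrals are finite) for every ξ ∈ (0,T), f is continuous on (0,T), and f(ξ) = 0 for every ξ ∈ (0, T−t]. -/
open MeasureTheory

noncomputable section

open MeasureTheory Set Filter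
open scoped ENNReal


namespace Stmt14

/-- The truncated Riesz kernel with orientation `c = ±1`. -/
def ker (c β x ε : ℝ) : ℝ → ℝ := fun y => if ε < c * (x - y) then (c * (x - y)) ^ β else 0

lemma ker_meas (c β x ε : ℝ) : Measurable (ker c β x ε) := by
  unfold ker
  exact Measurable.ite
    (measurableSet_lt measurable_const (by fun_prop))
    (by fun_prop) measurable_const

lemma ker_nonneg (c β x ε : ℝ) (hε : 0 ≤ ε) (y : ℝ) : 0 ≤ ker c β x ε y := by
  unfold ker
  split
  · exact Real.rpow_nonneg (le_of_lt (lt_of_le_of_lt hε (by assumption))) _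
  · exact le_refl _

lemma ker_le (c β x ε : ℝ) (hε : 0 < ε) (hβ : β ≤ 0) (y : ℝ) : ker c β x ε y ≤ ε ^ β := by
  unfold ker
  split
  · exact Real.rpow_le_rpow_of_nonpos hε (le_of_lt (by assumption)) hβ
  · exact Real.rpow_nonneg hε.le _

/-- Integrability of the kernel on a bounded interval, for exponent `> -1`. -/
lemma ker_integrableOn {γ : ℝ} (hγ : -1 < γ) {c : ℝ} (hc : c = 1 ∨ c = -1)
    (x : ℝ) {ε : ℝ} (hε : 0 ≤ ε) (a b : ℝ) :
    IntegrableOn (ker c γ x ε) (Set.Ioc a b) := by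
  have h0 : IntegrableOn (ker c γ x 0) (Set.Ioc a b) := by
    rcases hc with rfl | rfl
    · have heq : ker 1 γ x 0 = Set.indicator (Set.Iio x) (fun y => (x - y) ^ γ) := by
        funext y
        rw [Set.indicator_apply]
        by_cases h : y < x
        · rw [ker, if_pos (by simpa [sub_pos] using h), if_pos (Set.mem_Iio.mpr h), one_mul]
        · rw [ker, if_neg (by simpa [sub_pos] using h), if_neg (by simpa using h)]
      rw [heq, IntegrableOn, integrable_indicator_iff measurableSet_Iio, IntegrableOn,
        Measure.restrict_restrict measurableSet_Iio]
      have hii : IntervalIntegrable (fun y => (x - y) ^ γ) volume a (min b x) := by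
        simpa using (intervalIntegral.intervalIntegrable_rpow' (a := x - a) (b := x - min b x) hγ).comp_sub_left x
      refine (intervalIntegrable_iff.mp hii).mono_set fun y hy => ?_
      exact Set.Ioc_subset_uIoc ⟨hy.2.1, le_min hy.2.2 hy.1.le⟩
    · have heq : ker (-1) γ x 0 = Set.indicator (Set.Ioi x) (fun y => (y - x) ^ γ) := by
        funext y
        rw [Set.indicator_apply]
        have hz : (-1 : ℝ) * (x - y) = y - x := by ring
        by_cases h : x < y
        · rw [ker, hz, if_pos (by simpa [sub_pos] using h), if_pos (Set.mem_Ioi.mpr h)]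
        · rw [ker, hz, if_neg (by simpa [sub_pos] using h), if_neg (by simpa using h)]
      rw [heq, IntegrableOn, integrable_indicator_iff measurableSet_Ioi, IntegrableOn,
        Measure.restrict_restrict measurableSet_Ioi]
      have hii : IntervalIntegrable (fun y => (y - x) ^ γ) volume (max a x) b := by
        simpa using (intervalIntegral.intervalIntegrable_rpow' (a := max a x - x) (b := b - x) hγ).comp_sub_right x
      refine (intervalIntegrable_iff.mp hii).mono_set fun y hy => ?_
      exact Set.Ioc_subset_uIoc ⟨max_lt hy.2.1 hy.1, hy.2.2⟩
  refine Integrable.mono h0 (ker_meas c γ x ε).aestronglyMeasurable ?_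
  refine Filter.Eventually.of_forall fun y => ?_
  rw [Real.norm_eq_abs, Real.norm_eq_abs, abs_of_nonneg (ker_nonneg _ _ _ _ hε y),
    abs_of_nonneg (ker_nonneg _ _ _ _ le_rfl y)]
  unfold ker
  split
  · rw [if_pos (lt_of_le_of_lt hε (by assumption))]
  · exact ker_nonneg c γ x 0 le_rfl y

lemma ker_sq (c β x : ℝ) {ε : ℝ} (hε : 0 ≤ ε) (y : ℝ) :
    ker c β x ε y ^ 2 = ker c (β + β) x ε y := by
  unfold ker
  split
  · rw [pow_two, ← Real.rpow_add (lt_of_le_of_lt hε (by assumption))]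
  · simp

lemma ker_memℒp {β : ℝ} (hβ : -2⁻¹ < β) {c : ℝ} (hc : c = 1 ∨ c = -1)
    (x : ℝ) {ε : ℝ} (hε : 0 ≤ ε) (a b : ℝ) :
    MemLp (ker c β x ε) 2 (volume.restrict (Set.Ioc a b)) := by
  rw [memLp_two_iff_integrable_sq (ker_meas c β x ε).aestronglyMeasurable]
  have : (fun y => ker c β x ε y ^ 2) = ker c (β + β) x ε := by
    funext y; exact ker_sq c β x hε y
  rw [this]
  exact ker_integrableOn (by linarith) hc x hε a b


/-- The square of the tail `ker 0 - ker ε` has small integral. -/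
lemma ker_tail_sq {β : ℝ} (hβ1 : -2⁻¹ < β) {c : ℝ} (hc : c = 1 ∨ c = -1)
    (x : ℝ) {ε : ℝ} (hε : 0 < ε) (a b : ℝ) :
    ∫ y in Set.Ioc a b, (ker c β x 0 y - ker c β x ε y) ^ 2 ≤ ε ^ (β + β + 1) / (β + β + 1) := by
  have hexp : (0:ℝ) < β + β + 1 := by linarith
  rcases hc with rfl | rfl
  · -- c = 1 : tail is supported on `Ico (x-ε) x`
    have heq : ∀ y, (ker 1 β x 0 y - ker 1 β x ε y) ^ 2
        = Set.indicator (Set.Ico (x - ε) x) (fun y => (x - y) ^ (β + β)) y := by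
      intro y
      rw [Set.indicator_apply, ker, ker, one_mul]
      by_cases h1 : 0 < x - y
      · by_cases h2 : x - y ≤ ε
        · rw [if_pos h1, if_neg (not_lt.mpr h2),
            if_pos (Set.mem_Ico.mpr ⟨by linarith, by linarith⟩), sub_zero,
            pow_two, ← Real.rpow_add h1]
        · rw [if_pos h1, if_pos (lt_of_not_ge h2),
            if_neg (by rw [Set.mem_Ico]; push_neg; intro h; linarith [lt_of_not_ge h2]),
            sub_self, zero_pow two_ne_zero]
      · rw [if_neg h1, if_neg (by intro h; exact h1 (lt_trans hε h)),
          if_neg (by rw [Set.mem_Ico]; push_neg; intro h; linarith), sub_self,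
          zero_pow two_ne_zero]
    simp_rw [heq]
    rw [setIntegral_indicator measurableSet_Ico]
    have hii : IntervalIntegrable (fun y => (x - y) ^ (β + β)) volume (x - ε) x := by
      simpa using (intervalIntegral.intervalIntegrable_rpow' (a := ε) (b := (0:ℝ))
        (by linarith : (-1:ℝ) < β + β)).comp_sub_left x
    have hint : IntegrableOn (fun y => (x - y) ^ (β + β)) (Set.Ico (x - ε) x) := by
      rw [IntegrableOn, Measure.restrict_congr_set Ico_ae_eq_Ioc]
      exact hii.1
    have hmono : ∫ y in Set.Ioc a b ∩ Set.Ico (x - ε) x, (x - y) ^ (β + β)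
        ≤ ∫ y in Set.Ico (x - ε) x, (x - y) ^ (β + β) := by
      refine setIntegral_mono_set hint ?_ (HasSubset.Subset.eventuallyLE Set.inter_subset_right)
      refine (ae_restrict_iff' measurableSet_Ico).mpr (Filter.Eventually.of_forall fun y hy => ?_)
      exact Real.rpow_nonneg (by linarith [hy.2]) _
    refine hmono.trans (le_of_eq ?_)
    rw [Measure.restrict_congr_set Ico_ae_eq_Ioc,
      ← intervalIntegral.integral_of_le (by linarith : x - ε ≤ x)]
    rw [intervalIntegral.integral_comp_sub_left (fun w => w ^ (β + β)) x]
    simp only [sub_self, sub_sub_cancel]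
    rw [integral_rpow (Or.inl (by linarith : (-1:ℝ) < β + β)),
      Real.zero_rpow (ne_of_gt hexp), sub_zero]
  · -- c = -1 : tail is supported on `Ioc x (x+ε)`
    have hz : ∀ y : ℝ, (-1 : ℝ) * (x - y) = y - x := fun y => by ring
    have heq : ∀ y, (ker (-1) β x 0 y - ker (-1) β x ε y) ^ 2
        = Set.indicator (Set.Ioc x (x + ε)) (fun y => (y - x) ^ (β + β)) y := by
      intro y
      rw [Set.indicator_apply, ker, ker, hz y]
      by_cases h1 : 0 < y - x
      · by_cases h2 : y - x ≤ ε
        · rw [if_pos h1, if_neg (not_lt.mpr h2),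
            if_pos (Set.mem_Ioc.mpr ⟨by linarith, by linarith⟩), sub_zero,
            pow_two, ← Real.rpow_add h1]
        · rw [if_pos h1, if_pos (lt_of_not_ge h2),
            if_neg (by rw [Set.mem_Ioc]; push_neg; intro h; linarith [lt_of_not_ge h2]),
            sub_self, zero_pow two_ne_zero]
      · rw [if_neg h1, if_neg (by intro h; exact h1 (lt_trans hε h)),
          if_neg (by rw [Set.mem_Ioc]; push_neg; intro h; linarith), sub_self,
          zero_pow two_ne_zero]
    simp_rw [heq]
    rw [setIntegral_indicator measurableSet_Ioc]
    have hii : IntervalIntegrable (fun y => (y - x) ^ (β + β)) volume x (x + ε) := by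
      simpa [add_comm] using (intervalIntegral.intervalIntegrable_rpow' (a := (0:ℝ)) (b := ε)
        (by linarith : (-1:ℝ) < β + β)).comp_sub_right x
    have hmono : ∫ y in Set.Ioc a b ∩ Set.Ioc x (x + ε), (y - x) ^ (β + β)
        ≤ ∫ y in Set.Ioc x (x + ε), (y - x) ^ (β + β) := by
      refine setIntegral_mono_set hii.1 ?_ (HasSubset.Subset.eventuallyLE Set.inter_subset_right)
      refine (ae_restrict_iff' measurableSet_Ioc).mpr (Filter.Eventually.of_forall fun y hy => ?_)
      exact Real.rpow_nonneg (by linarith [hy.1]) _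
    refine hmono.trans (le_of_eq ?_)
    rw [← intervalIntegral.integral_of_le (by linarith : x ≤ x + ε)]
    rw [intervalIntegral.integral_comp_sub_right (fun w => w ^ (β + β)) x]
    simp only [sub_self, add_sub_cancel_left]
    rw [integral_rpow (Or.inl (by linarith : (-1:ℝ) < β + β)),
      Real.zero_rpow (ne_of_gt hexp), sub_zero]

variable {E : Type*} [NormedAddCommGroup E] [NormedSpace ℝ E] [CompleteSpace E]

lemma contK {α : ℝ} (hα1 : 1 / 2 < α) (hα2 : α < 1) (a b : ℝ) {c : ℝ} (hc : c = 1 ∨ c = -1)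
    (u : ℝ → E) (hu : MemLp u 2 (volume.restrict (Set.Ioc a b))) :
    Continuous (fun x => ∫ y in Set.Ioc a b, ker c (α - 1) x 0 y • u y) := by
  set β := α - 1 with hβdef
  have hβ1 : -2⁻¹ < β := by rw [hβdef]; linarith
  have hβ0 : β ≤ 0 := by rw [hβdef]; linarith
  have hA : (0:ℝ) < β + β + 1 := by rw [hβdef]; linarith
  set μ := volume.restrict (Set.Ioc a b) with hμ
  haveI : IsFiniteMeasure μ := by
    constructor
    rw [hμ, Measure.restrict_apply_univ, Real.volume_Ioc]
    exact ENNReal.ofReal_lt_top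
  have hpq : (1:ℝ≥0∞) / 1 = 1 / 2 + 1 / 2 := by
    rw [ENNReal.div_add_div_same, one_div_one,
      show (1:ℝ≥0∞) + 1 = 2 from one_add_one_eq_two]
    exact (ENNReal.div_self (by norm_num) (by norm_num)).symm
  have hint : ∀ {ε : ℝ}, 0 ≤ ε → ∀ x : ℝ, Integrable (fun y => ker c β x ε y • u y) μ := by
    intro ε hε x
    have hker := ker_memℒp hβ1 hc x hε a b
    exact memLp_one_iff_integrable.mp (hu.smul hker (r := 1))
  set Cu := (∫ y, ‖u y‖ ^ (2:ℝ) ∂μ) ^ ((1:ℝ)/2) with hCudef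
  have hCu : 0 ≤ Cu :=
    Real.rpow_nonneg (integral_nonneg fun y => Real.rpow_nonneg (norm_nonneg _) _) _
  have key : ∀ {ε : ℝ}, 0 < ε → ∀ x : ℝ,
      ‖(∫ y, ker c β x 0 y • u y ∂μ) - ∫ y, ker c β x ε y • u y ∂μ‖
        ≤ (ε ^ (β + β + 1) / (β + β + 1)) ^ ((1:ℝ)/2) * Cu := by
    intro ε hε x
    rw [← integral_sub (hint le_rfl x) (hint hε.le x)]
    have h1 : ‖∫ y, (ker c β x 0 y • u y - ker c β x ε y • u y) ∂μ‖
        ≤ ∫ y, ‖ker c β x 0 y - ker c β x ε y‖ * ‖u y‖ ∂μ := by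
      refine (norm_integral_le_integral_norm _).trans (le_of_eq (integral_congr_ae ?_))
      refine Filter.Eventually.of_forall fun y => ?_
      show ‖ker c β x 0 y • u y - ker c β x ε y • u y‖
          = ‖ker c β x 0 y - ker c β x ε y‖ * ‖u y‖
      rw [← sub_smul, norm_smul]
    refine h1.trans ?_
    have hd : MemLp (fun y => ker c β x 0 y - ker c β x ε y) (ENNReal.ofReal 2) μ := by
      rw [ENNReal.ofReal_ofNat]
      exact (ker_memℒp hβ1 hc x le_rfl a b).sub (ker_memℒp hβ1 hc x hε.le a b)
    have hun : MemLp (fun y => ‖u y‖) (ENNReal.ofReal 2) μ := by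
      rw [ENNReal.ofReal_ofNat]; exact hu.norm
    have hconj : (2:ℝ).HolderConjugate 2 := (Real.holderConjugate_iff_eq_conjExponent one_lt_two).mpr (by norm_num)
    have hCS := integral_mul_norm_le_Lp_mul_Lq (μ := μ) hconj hd hun
    simp only [norm_norm] at hCS
    refine hCS.trans ?_
    refine mul_le_mul_of_nonneg_right ?_
      (Real.rpow_nonneg (integral_nonneg fun y => Real.rpow_nonneg (norm_nonneg _) _) _)
    have heqint : ∫ y, ‖ker c β x 0 y - ker c β x ε y‖ ^ (2:ℝ) ∂μ
        = ∫ y, (ker c β x 0 y - ker c β x ε y) ^ 2 ∂μ := by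
      refine integral_congr_ae (Filter.Eventually.of_forall fun y => ?_)
      show ‖ker c β x 0 y - ker c β x ε y‖ ^ (2:ℝ) = (ker c β x 0 y - ker c β x ε y) ^ 2
      rw [show (2:ℝ) = ((2:ℕ):ℝ) by norm_num, Real.rpow_natCast, Real.norm_eq_abs, sq_abs]
    rw [heqint]
    exact Real.rpow_le_rpow (integral_nonneg fun y => sq_nonneg _)
      (ker_tail_sq hβ1 hc x hε a b) (by norm_num)
  have contFn : ∀ {ε : ℝ}, 0 < ε → Continuous (fun x => ∫ y, ker c β x ε y • u y ∂μ) := by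
    intro ε hε
    rw [continuous_iff_continuousAt]
    intro x₀
    have hcsq : c * c = 1 := by rcases hc with rfl | rfl <;> norm_num
    refine tendsto_integral_filter_of_dominated_convergence (bound := fun y => ε ^ β * ‖u y‖)
      ?_ ?_ ?_ ?_
    · exact Filter.Eventually.of_forall fun x =>
        ((ker_meas c β x ε).aestronglyMeasurable.smul hu.1)
    · refine Filter.Eventually.of_forall fun x => Filter.Eventually.of_forall fun y => ?_
      rw [norm_smul, Real.norm_eq_abs, abs_of_nonneg (ker_nonneg c β x ε hε.le y)]
      exact mul_le_mul_of_nonneg_right (ker_le c β x ε hε hβ0 y) (norm_nonneg _)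
    · exact (hu.integrable one_le_two).norm.const_mul _
    · have hnull : ∀ᵐ y ∂μ, y ≠ x₀ - c * ε := by
        refine ae_restrict_of_ae ?_
        refine ae_iff.mpr ?_
        simp only [ne_eq, not_not, Set.setOf_eq_eq_singleton]
        exact measure_singleton _
      refine hnull.mono fun y hy => ?_
      have hy' : c * (x₀ - y) ≠ ε := by
        intro h
        apply hy
        have h2 : c * (c * (x₀ - y)) = c * ε := by rw [h]
        rw [← mul_assoc, hcsq, one_mul] at h2
        linarith
      refine Filter.Tendsto.smul_const ?_ (u y)
      have hcont : Continuous fun x : ℝ => c * (x - y) := by fun_prop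
      rcases lt_or_gt_of_ne hy' with hlt | hgt
      · have hev : ∀ᶠ x in nhds x₀, ker c β x ε y = 0 :=
          ((hcont.tendsto x₀).eventually_lt_const hlt).mono fun x hx =>
            if_neg (not_lt.mpr hx.le)
        have h0 : ker c β x₀ ε y = 0 := if_neg (not_lt.mpr hlt.le)
        rw [h0]
        exact Filter.Tendsto.congr' (hev.mono fun x hx => hx.symm) tendsto_const_nhds
      · have hev : ∀ᶠ x in nhds x₀, ker c β x ε y = (c * (x - y)) ^ β :=
          ((hcont.tendsto x₀).eventually_const_lt hgt).mono fun x hx => if_pos hx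
        have h0 : ker c β x₀ ε y = (c * (x₀ - y)) ^ β := if_pos hgt
        rw [h0]
        refine Filter.Tendsto.congr' (hev.mono fun x hx => hx.symm) ?_
        exact (hcont.tendsto x₀).rpow_const (Or.inl (ne_of_gt (hε.trans hgt)))
  have hεn : ∀ n : ℕ, (0:ℝ) < 1 / (n + 1) := fun n => by positivity
  have hbnd : Tendsto
      (fun n : ℕ => (((1:ℝ)/(n+1)) ^ (β + β + 1) / (β + β + 1)) ^ ((1:ℝ)/2) * Cu)
      atTop (nhds 0) := by
    have h1 : Tendsto (fun n : ℕ => (1:ℝ)/(n+1)) atTop (nhds 0) :=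
      tendsto_one_div_add_atTop_nhds_zero_nat
    have h2 := (((h1.rpow_const (Or.inr hA.le)).div_const (β + β + 1)).rpow_const
      (Or.inr (by norm_num : (0:ℝ) ≤ 1/2))).mul_const Cu
    simpa [Real.zero_rpow (ne_of_gt hA), zero_div,
      Real.zero_rpow (by norm_num : (1:ℝ)/2 ≠ 0)] using h2
  have hunif : TendstoUniformly (fun (n : ℕ) x => ∫ y, ker c β x (1/(n+1)) y • u y ∂μ)
      (fun x => ∫ y, ker c β x 0 y • u y ∂μ) atTop := by
    rw [Metric.tendstoUniformly_iff]
    intro δ hδ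
    filter_upwards [hbnd.eventually_lt_const hδ] with n hn x
    rw [dist_eq_norm]
    exact lt_of_le_of_lt (key (hεn n) x) hn
  exact hunif.continuous (Filter.Eventually.of_forall fun n => contFn (hεn n)).frequently

end Stmt14

/-- For `0 ≤ s < t ≤ T` and `v ∈ L²((0,T);ℝ^d)`, the pointwise expression
`f(ξ) = (1/Γ(α)²) ∫_{T−t}^{T−s} 1_{τ<ξ} (ξ−τ)^(α−1) (∫_τ^T (η−τ)^(α−1) v(η) dη) dτ` of
`Q_T(t,s)v` is well defined (all the integrals are finite) for every `ξ ∈ (0,T)`, is continuous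
on `(0,T)`, and vanishes on `(0, T−t]`. -/
theorem statement14 (d : ℕ) (hd : 1 ≤ d) (T α : ℝ) (hT : 0 < T)
    (hα1 : 1 / 2 < α) (hα2 : α < 1)
    (s t : ℝ) (hs : 0 ≤ s) (hst : s < t) (htT : t ≤ T)
    (v : ℝ → EuclideanSpace ℝ (Fin d)) (hv : MemLp v 2 (fracMeas T)) :
    let f : ℝ → EuclideanSpace ℝ (Fin d) := fun ξ =>
      (1 / Real.Gamma α ^ 2) •
        ∫ τ in Set.Ioc (T - t) (T - s),
          (if τ < ξ then (ξ - τ) ^ (α - 1) else 0) •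
            ∫ η in Set.Ioc τ T, ((η - τ) ^ (α - 1)) • v η
    (∀ τ ∈ Set.Ioc (T - t) (T - s),
        IntegrableOn (fun η => ((η - τ) ^ (α - 1)) • v η) (Set.Ioc τ T)) ∧
    (∀ ξ ∈ Set.Ioo (0 : ℝ) T,
        IntegrableOn
          (fun τ => (if τ < ξ then (ξ - τ) ^ (α - 1) else 0) •
            ∫ η in Set.Ioc τ T, ((η - τ) ^ (α - 1)) • v η)
          (Set.Ioc (T - t) (T - s))) ∧
    ContinuousOn f (Set.Ioo 0 T) ∧
    (∀ ξ ∈ Set.Ioc (0 : ℝ) (T - t), f ξ = 0) := by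
  intro f
  have hβ' : (-2⁻¹ : ℝ) < α - 1 := by linarith
  have hA0 : (0:ℝ) ≤ T - t := by linarith
  have hpq : (1:ℝ≥0∞) / 1 = 1 / 2 + 1 / 2 := by
    rw [ENNReal.div_add_div_same, one_div_one,
      show (1:ℝ≥0∞) + 1 = 2 from one_add_one_eq_two]
    exact (ENNReal.div_self (by norm_num) (by norm_num)).symm
  have hv' : MemLp v 2 (volume.restrict (Set.Ioc 0 T)) := by
    rwa [show fracMeas T = volume.restrict (Set.Ioc 0 T) from
      Measure.restrict_congr_set Ioo_ae_eq_Ioc] at hv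
  -- the inner integral as a continuous function
  set G : ℝ → EuclideanSpace ℝ (Fin d) :=
    fun τ => ∫ η in Set.Ioc 0 T, Stmt14.ker (-1) (α - 1) τ 0 η • v η with hGdef
  have hGcont : Continuous G := Stmt14.contK hα1 hα2 0 T (Or.inr rfl) v hv'
  have hGeq : ∀ τ : ℝ, 0 ≤ τ → G τ = ∫ η in Set.Ioc τ T, ((η - τ) ^ (α - 1)) • v η := by
    intro τ hτ
    have hker : ∀ η : ℝ, Stmt14.ker (-1) (α - 1) τ 0 η • v η
        = Set.indicator (Set.Ioi τ) (fun η => ((η - τ) ^ (α - 1)) • v η) η := by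
      intro η
      rw [Set.indicator_apply]
      have hz : (-1:ℝ) * (τ - η) = η - τ := by ring
      by_cases h : τ < η
      · rw [show Stmt14.ker (-1) (α - 1) τ 0 η = (η - τ) ^ (α - 1) from by
          rw [Stmt14.ker]; simp only [hz]; exact if_pos (by linarith),
          if_pos (Set.mem_Ioi.mpr h)]
      · rw [show Stmt14.ker (-1) (α - 1) τ 0 η = 0 from by
          rw [Stmt14.ker]; simp only [hz]; exact if_neg (by intro hcon; exact h (by linarith)),
          if_neg (by simpa using h), zero_smul]
    have h1 : G τ = ∫ η in Set.Ioc 0 T ∩ Set.Ioi τ, ((η - τ) ^ (α - 1)) • v η := by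
      rw [hGdef]
      simp only [hker]
      exact setIntegral_indicator measurableSet_Ioi
    rw [h1, show Set.Ioc 0 T ∩ Set.Ioi τ = Set.Ioc τ T from ?_]
    ext η
    simp only [Set.mem_inter_iff, Set.mem_Ioc, Set.mem_Ioi]
    constructor
    · rintro ⟨⟨h1, h2⟩, h3⟩; exact ⟨h3, h2⟩
    · rintro ⟨h1, h2⟩; exact ⟨⟨lt_of_le_of_lt hτ h1, h2⟩, h1⟩
  obtain ⟨C, hC⟩ : ∃ C, ∀ τ ∈ Set.Icc (T - t) (T - s), ‖G τ‖ ≤ C :=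
    isCompact_Icc.exists_bound_of_continuousOn hGcont.continuousOn
  haveI : IsFiniteMeasure (volume.restrict (Set.Ioc (T - t) (T - s))) := by
    constructor
    rw [Measure.restrict_apply_univ, Real.volume_Ioc]
    exact ENNReal.ofReal_lt_top
  have hGmem : MemLp G 2 (volume.restrict (Set.Ioc (T - t) (T - s))) := by
    refine MemLp.of_bound hGcont.aestronglyMeasurable C ?_
    exact (ae_restrict_iff' measurableSet_Ioc).mpr
      (Filter.Eventually.of_forall fun τ hτ => hC τ ⟨hτ.1.le, hτ.2⟩)
  -- Part 1
  have part1 : ∀ τ ∈ Set.Ioc (T - t) (T - s),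
      IntegrableOn (fun η => ((η - τ) ^ (α - 1)) • v η) (Set.Ioc τ T) := by
    intro τ hτ
    have hτ0 : (0:ℝ) < τ := lt_of_le_of_lt hA0 hτ.1
    have hvτ : MemLp v 2 (volume.restrict (Set.Ioc τ T)) :=
      hv'.mono_measure (Measure.restrict_mono (Set.Ioc_subset_Ioc_left hτ0.le) le_rfl)
    have hker : MemLp (Stmt14.ker (-1) (α - 1) τ 0) 2 (volume.restrict (Set.Ioc τ T)) :=
      Stmt14.ker_memℒp hβ' (Or.inr rfl) τ le_rfl τ T
    have hone := memLp_one_iff_integrable.mp (hvτ.smul hker (r := 1))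
    refine hone.congr ((ae_restrict_iff' measurableSet_Ioc).mpr
      (Filter.Eventually.of_forall fun η hη => ?_))
    have hz : (-1:ℝ) * (τ - η) = η - τ := by ring
    show Stmt14.ker (-1) (α - 1) τ 0 η • v η = ((η - τ) ^ (α - 1)) • v η
    rw [show Stmt14.ker (-1) (α - 1) τ 0 η = (η - τ) ^ (α - 1) from by
      rw [Stmt14.ker]; simp only [hz]; exact if_pos (by linarith [hη.1])]
  -- Part 2
  have kereq : ∀ ξ τ : ℝ, Stmt14.ker 1 (α - 1) ξ 0 τ
      = (if τ < ξ then (ξ - τ) ^ (α - 1) else 0) := by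
    intro ξ τ
    rw [Stmt14.ker]
    simp only [one_mul]
    by_cases h : τ < ξ
    · rw [if_pos (by linarith), if_pos h]
    · rw [if_neg (by intro hcon; exact h (by linarith)), if_neg h]
  have part2 : ∀ ξ ∈ Set.Ioo (0 : ℝ) T,
      IntegrableOn
        (fun τ => (if τ < ξ then (ξ - τ) ^ (α - 1) else 0) •
          ∫ η in Set.Ioc τ T, ((η - τ) ^ (α - 1)) • v η)
        (Set.Ioc (T - t) (T - s)) := by
    intro ξ _
    have hWmem : MemLp (Stmt14.ker 1 (α - 1) ξ 0) 2
        (volume.restrict (Set.Ioc (T - t) (T - s))) :=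
      Stmt14.ker_memℒp hβ' (Or.inl rfl) ξ le_rfl (T - t) (T - s)
    have h2 := memLp_one_iff_integrable.mp (hGmem.smul hWmem (r := 1))
    refine h2.congr ((ae_restrict_iff' measurableSet_Ioc).mpr
      (Filter.Eventually.of_forall fun τ hτ => ?_))
    show Stmt14.ker 1 (α - 1) ξ 0 τ • G τ = _
    rw [kereq, hGeq τ (by linarith [hτ.1])]
  -- Part 3
  have hF := Stmt14.contK hα1 hα2 (T - t) (T - s) (Or.inl rfl) G hGmem
  have hfeq : f = fun ξ => (1 / Real.Gamma α ^ 2) •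
      ∫ τ in Set.Ioc (T - t) (T - s), Stmt14.ker 1 (α - 1) ξ 0 τ • G τ := by
    funext ξ
    show (1 / Real.Gamma α ^ 2) • _ = (1 / Real.Gamma α ^ 2) • _
    congr 1
    refine setIntegral_congr_fun measurableSet_Ioc fun τ hτ => ?_
    rw [kereq, hGeq τ (by linarith [hτ.1])]
  have part3 : ContinuousOn f (Set.Ioo 0 T) := by
    rw [hfeq]
    exact (hF.const_smul (1 / Real.Gamma α ^ 2)).continuousOn
  -- Part 4
  have part4 : ∀ ξ ∈ Set.Ioc (0 : ℝ) (T - t), f ξ = 0 := by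
    intro ξ hξ
    show (1 / Real.Gamma α ^ 2) •
      (∫ τ in Set.Ioc (T - t) (T - s),
        (if τ < ξ then (ξ - τ) ^ (α - 1) else 0) •
          ∫ η in Set.Ioc τ T, ((η - τ) ^ (α - 1)) • v η) = 0
    rw [setIntegral_congr_fun measurableSet_Ioc
      (g := fun _ => (0 : EuclideanSpace ℝ (Fin d))) fun τ hτ => ?_, integral_zero, smul_zero]
    rw [if_neg (not_lt.mpr (le_trans hξ.2 hτ.1.le)), zero_smul]
  exact ⟨part1, part2, part3, part4⟩
end
end

section
/- Let A : [0,T] → ℝ^{d×d} and b : [0,T] → ℝ^d be continuous, let w ∈ C([0,T]; ℝ^d), and set b̃(t) = A(t)w(t) + b(t). Define B(w)(t,ξ) = 1_{ξ>t} k₂(ξ−t)·b̃(t) for t, ξ ∈ (0,T). Then there exists a constant L > 0 such that for all r, t ∈ [0,T], ∫₀^T |B(w)(t,ξ) − B(w)(r,ξ)|² dξ ≤ L·( |t−r|^(2α−1) + |b̃(t) − b̃(r)|² ). Consequently, the map t ↦ B(w)(t,·) is continuous from [0,T] to L²((0,T); ℝ^d). -/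
open MeasureTheory


private lemma sq_rpow {x : ℝ} (hx : 0 ≤ x) (a : ℝ) : (x ^ a) ^ 2 = x ^ (2 * a) := by
  rw [← Real.rpow_natCast (x ^ a) 2, ← Real.rpow_mul hx]
  norm_num [mul_comm]

private lemma intpow_integrableOn {p : ℝ} (hp : -1 < p) (a c D : ℝ) (hcd : c ≤ D) :
    IntegrableOn (fun ξ : ℝ => (ξ - a) ^ p) (Set.Ioc c D) := by
  have h := (intervalIntegral.intervalIntegrable_rpow' (a := c - a) (b := D - a) hp).comp_sub_right a
  simp only [sub_add_cancel] at h
  exact (intervalIntegrable_iff_integrableOn_Ioc_of_le hcd).mp h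

private lemma intpow_integral {p : ℝ} (hp : -1 < p) (a c D : ℝ) (hcd : c ≤ D) :
    ∫ ξ in Set.Ioc c D, (ξ - a) ^ p = ((D - a) ^ (p + 1) - (c - a) ^ (p + 1)) / (p + 1) := by
  rw [← intervalIntegral.integral_of_le hcd,
    intervalIntegral.integral_comp_sub_right (fun x : ℝ => x ^ p) a,
    integral_rpow (Or.inl hp)]

private lemma G_meas (α t : ℝ) :
    Measurable (fun ξ : ℝ => if t < ξ then (ξ - t) ^ (α - 1) else 0) := by
  refine Measurable.ite (measurableSet_lt measurable_const measurable_id) ?_ measurable_const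
  fun_prop

private lemma kernel_sq (α T r : ℝ) (hα1 : 1/2 < α) (hα2 : α < 1)
    (hr0 : 0 ≤ r) (hrT : r ≤ T) :
    IntegrableOn (fun ξ : ℝ => (if r < ξ then (ξ - r) ^ (α - 1) else 0) ^ 2) (Set.Ioo 0 T)
    ∧ ∫ ξ in Set.Ioo 0 T, (if r < ξ then (ξ - r) ^ (α - 1) else 0) ^ 2
        ≤ T ^ (2 * α - 1) / (2 * α - 1) := by
  have hp : (-1 : ℝ) < 2 * α - 2 := by linarith
  have hβ : (0 : ℝ) < 2 * α - 1 := by linarith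
  set f : ℝ → ℝ := fun ξ => (if r < ξ then (ξ - r) ^ (α - 1) else 0) ^ 2 with hf
  have hzero : ∀ ξ ∈ Set.Ioc 0 r, f ξ = 0 := by
    intro ξ hξ
    simp [hf, not_lt.mpr hξ.2]
  have hcongr : ∀ ξ ∈ Set.Ioc r T, f ξ = (ξ - r) ^ (2 * α - 2) := by
    intro ξ hξ
    have h1 : (0:ℝ) ≤ ξ - r := by linarith [hξ.1]
    rw [hf]
    simp only [if_pos hξ.1]
    rw [sq_rpow h1]
    ring_nf
  have hint1 : IntegrableOn f (Set.Ioc 0 r) :=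
    (integrableOn_zero (μ := volume)).congr_fun (fun ξ hξ => (hzero ξ hξ).symm) measurableSet_Ioc
  have hint2 : IntegrableOn f (Set.Ioc r T) :=
    (intpow_integrableOn hp r r T hrT).congr_fun
      (fun ξ hξ => (hcongr ξ hξ).symm) measurableSet_Ioc
  have hsub : Set.Ioo 0 T ⊆ Set.Ioc 0 r ∪ Set.Ioc r T := by
    intro ξ hξ
    by_cases h : ξ ≤ r
    · exact Or.inl ⟨hξ.1, h⟩
    · exact Or.inr ⟨lt_of_not_ge h, hξ.2.le⟩
  have hIoo : IntegrableOn f (Set.Ioo 0 T) :=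
    (hint1.union hint2).mono_set hsub
  refine ⟨hIoo, ?_⟩
  rw [← integral_Ioc_eq_integral_Ioo, ← Set.Ioc_union_Ioc_eq_Ioc hr0 hrT,
    setIntegral_union (Set.Ioc_disjoint_Ioc_of_le le_rfl) measurableSet_Ioc hint1 hint2,
    setIntegral_eq_zero_of_forall_eq_zero hzero, zero_add,
    setIntegral_congr_fun measurableSet_Ioc hcongr, intpow_integral hp r r T hrT]
  have h2 : (2 * α - 2) + 1 = 2 * α - 1 := by ring
  rw [h2, sub_self, Real.zero_rpow (ne_of_gt hβ), sub_zero]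
  have h3 : (T - r) ^ (2*α-1) ≤ T ^ (2*α-1) :=
    Real.rpow_le_rpow (by linarith) (by linarith) hβ.le
  exact (div_le_div_iff_of_pos_right hβ).mpr h3

private lemma kernel_diff (α T r t : ℝ) (hα1 : 1/2 < α) (hα2 : α < 1)
    (hr0 : 0 ≤ r) (hrt : r ≤ t) (htT : t ≤ T) :
    IntegrableOn (fun ξ : ℝ => ((if t < ξ then (ξ - t) ^ (α - 1) else 0)
        - (if r < ξ then (ξ - r) ^ (α - 1) else 0)) ^ 2) (Set.Ioo 0 T)
    ∧ ∫ ξ in Set.Ioo 0 T, ((if t < ξ then (ξ - t) ^ (α - 1) else 0)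
        - (if r < ξ then (ξ - r) ^ (α - 1) else 0)) ^ 2
      ≤ 2 / (2 * α - 1) * (t - r) ^ (2 * α - 1) := by
  have hp : (-1 : ℝ) < 2 * α - 2 := by linarith
  have hβ : (0 : ℝ) < 2 * α - 1 := by linarith
  have ht0 : (0:ℝ) ≤ t := hr0.trans hrt
  set f : ℝ → ℝ := fun ξ => ((if t < ξ then (ξ - t) ^ (α - 1) else 0)
      - (if r < ξ then (ξ - r) ^ (α - 1) else 0)) ^ 2 with hf
  have hmeasf : Measurable f := (((G_meas α t).sub (G_meas α r)).pow_const 2)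
  -- zero on (0, r]
  have hzero : ∀ ξ ∈ Set.Ioc 0 r, f ξ = 0 := by
    intro ξ hξ
    have h1 : ¬ t < ξ := not_lt.mpr (hξ.2.trans hrt)
    have h2 : ¬ r < ξ := not_lt.mpr hξ.2
    simp [hf, h1, h2]
  -- on (r, t]: f = (ξ - r)^(2α-2)
  have hmid : ∀ ξ ∈ Set.Ioc r t, f ξ = (ξ - r) ^ (2 * α - 2) := by
    intro ξ hξ
    have h1 : ¬ t < ξ := not_lt.mpr hξ.2
    have h2 : (0:ℝ) ≤ ξ - r := by linarith [hξ.1]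
    rw [hf]
    simp only [if_pos hξ.1, if_neg h1, zero_sub, neg_sq]
    rw [sq_rpow h2]; ring_nf
  -- on (t, T]: f ≤ g
  set g : ℝ → ℝ := fun ξ => (ξ - t) ^ (2 * α - 2) - (ξ - r) ^ (2 * α - 2) with hg
  have htail : ∀ ξ ∈ Set.Ioc t T, f ξ ≤ g ξ := by
    intro ξ hξ
    have hξt : (0:ℝ) < ξ - t := by linarith [hξ.1]
    have hξr : (0:ℝ) < ξ - r := by linarith [hξ.1]
    have hba : (ξ - r) ^ (α - 1) ≤ (ξ - t) ^ (α - 1) :=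
      Real.rpow_le_rpow_of_nonpos hξt (by linarith) (by linarith)
    have hb0 : (0:ℝ) ≤ (ξ - r) ^ (α - 1) := Real.rpow_nonneg hξr.le _
    have hsq1 : ((ξ - t) ^ (α - 1)) ^ 2 = (ξ - t) ^ (2 * α - 2) := by
      rw [sq_rpow hξt.le]; ring_nf
    have hsq2 : ((ξ - r) ^ (α - 1)) ^ 2 = (ξ - r) ^ (2 * α - 2) := by
      rw [sq_rpow hξr.le]; ring_nf
    have h1 : t < ξ := hξ.1
    have h2 : r < ξ := by linarith
    rw [hf, hg]
    simp only [if_pos h1, if_pos h2]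
    rw [← hsq1, ← hsq2]
    nlinarith [hba, hb0]
  have hfnn : ∀ ξ, 0 ≤ f ξ := fun ξ => sq_nonneg _
  -- integrability on pieces
  have hint1 : IntegrableOn f (Set.Ioc 0 r) :=
    (integrableOn_zero (μ := volume)).congr_fun (fun ξ hξ => (hzero ξ hξ).symm) measurableSet_Ioc
  have hint2 : IntegrableOn f (Set.Ioc r t) :=
    (intpow_integrableOn hp r r t hrt).congr_fun
      (fun ξ hξ => (hmid ξ hξ).symm) measurableSet_Ioc
  have hintg : IntegrableOn g (Set.Ioc t T) :=
    (intpow_integrableOn hp t t T htT).sub (intpow_integrableOn hp r t T htT)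
  have hint3 : IntegrableOn f (Set.Ioc t T) := by
    refine Integrable.mono' hintg hmeasf.aestronglyMeasurable.restrict ?_
    rw [ae_restrict_iff' measurableSet_Ioc]
    exact Filter.Eventually.of_forall fun ξ hξ => by
      rw [Real.norm_eq_abs, abs_of_nonneg (hfnn ξ)]; exact htail ξ hξ
  have hint12 : IntegrableOn f (Set.Ioc 0 t) := by
    rw [← Set.Ioc_union_Ioc_eq_Ioc hr0 hrt]
    exact hint1.union hint2
  have hIoo : IntegrableOn f (Set.Ioo 0 T) := by
    refine (hint12.union hint3).mono_set ?_
    intro ξ hξ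
    by_cases h : ξ ≤ t
    · exact Or.inl ⟨hξ.1, h⟩
    · exact Or.inr ⟨lt_of_not_ge h, hξ.2.le⟩
  refine ⟨hIoo, ?_⟩
  have hβne : (2 * α - 1) ≠ 0 := ne_of_gt hβ
  have h21 : (2 * α - 2) + 1 = 2 * α - 1 := by ring
  -- integral over (0, t]
  have hI12 : ∫ ξ in Set.Ioc 0 t, f ξ = (t - r) ^ (2 * α - 1) / (2 * α - 1) := by
    rw [← Set.Ioc_union_Ioc_eq_Ioc hr0 hrt,
      setIntegral_union (Set.Ioc_disjoint_Ioc_of_le le_rfl) measurableSet_Ioc hint1 hint2,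
      setIntegral_eq_zero_of_forall_eq_zero hzero, zero_add,
      setIntegral_congr_fun measurableSet_Ioc hmid, intpow_integral hp r r t hrt,
      h21, sub_self, Real.zero_rpow hβne, sub_zero]
  -- integral over (t, T]
  have hI3 : ∫ ξ in Set.Ioc t T, f ξ ≤ (t - r) ^ (2 * α - 1) / (2 * α - 1) := by
    have hle : ∫ ξ in Set.Ioc t T, f ξ ≤ ∫ ξ in Set.Ioc t T, g ξ :=
      setIntegral_mono_on hint3 hintg measurableSet_Ioc htail
    have hIg : ∫ ξ in Set.Ioc t T, g ξ
        = ((T - t) ^ (2*α-1) - ((T - r) ^ (2*α-1) - (t - r) ^ (2*α-1))) / (2*α-1) := by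
      rw [hg, integral_sub (intpow_integrableOn hp t t T htT) (intpow_integrableOn hp r t T htT),
        intpow_integral hp t t T htT, intpow_integral hp r t T htT, h21,
        sub_self, Real.zero_rpow hβne, sub_zero]
      ring
    have hmono : (T - t) ^ (2*α-1) ≤ (T - r) ^ (2*α-1) :=
      Real.rpow_le_rpow (by linarith) (by linarith) hβ.le
    rw [hIg] at hle
    refine hle.trans ?_
    exact (div_le_div_iff_of_pos_right hβ).mpr (by linarith)
  calc ∫ ξ in Set.Ioo 0 T, f ξ
      = ∫ ξ in Set.Ioc 0 T, f ξ := (integral_Ioc_eq_integral_Ioo).symm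
    _ = (∫ ξ in Set.Ioc 0 t, f ξ) + ∫ ξ in Set.Ioc t T, f ξ := by
        rw [← Set.Ioc_union_Ioc_eq_Ioc ht0 htT,
          setIntegral_union (Set.Ioc_disjoint_Ioc_of_le le_rfl) measurableSet_Ioc hint12 hint3]
    _ ≤ (t - r) ^ (2 * α - 1) / (2 * α - 1) + (t - r) ^ (2 * α - 1) / (2 * α - 1) := by
        rw [hI12]; exact add_le_add_right hI3 _
    _ = 2 / (2 * α - 1) * (t - r) ^ (2 * α - 1) := by ring

set_option maxHeartbeats 1000000 in
private lemma key_est {d : ℕ} (α T : ℝ) (hα1 : 1/2 < α) (hα2 : α < 1)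
    (c : ℝ) (hc : 0 < c) (X Y : EuclideanSpace ℝ (Fin d))
    (r t : ℝ) (hr0 : 0 ≤ r) (hrt : r ≤ t) (htT : t ≤ T) :
    ∫ ξ in Set.Ioo (0:ℝ) T,
      ‖(if t < ξ then ((ξ - t) ^ (α - 1) / c) • X else 0)
        - (if r < ξ then ((ξ - r) ^ (α - 1) / c) • Y else 0)‖ ^ 2
    ≤ (2 * ‖X‖^2 / c^2) * (2 / (2*α-1) * (t-r)^(2*α-1))
      + (2 * ‖X - Y‖^2 / c^2) * (T^(2*α-1) / (2*α-1)) := by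
  have hβ : (0 : ℝ) < 2 * α - 1 := by linarith
  have htT' : (0:ℝ) ≤ T := (hr0.trans hrt).trans htT
  set Gt : ℝ → ℝ := fun ξ => if t < ξ then (ξ - t) ^ (α - 1) else 0 with hGt
  set Gr : ℝ → ℝ := fun ξ => if r < ξ then (ξ - r) ^ (α - 1) else 0 with hGr
  have hGrnn : ∀ ξ, 0 ≤ Gr ξ := by
    intro ξ; rw [hGr]; dsimp only
    split
    · exact Real.rpow_nonneg (by linarith [‹r < ξ›]) _
    · exact le_refl 0
  -- rewrite integrand
  have hrepr : (fun ξ : ℝ =>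
      ‖(if t < ξ then ((ξ - t) ^ (α - 1) / c) • X else 0)
        - (if r < ξ then ((ξ - r) ^ (α - 1) / c) • Y else 0)‖ ^ 2)
      = fun ξ : ℝ => ‖(Gt ξ / c) • X - (Gr ξ / c) • Y‖ ^ 2 := by
    funext ξ
    rw [hGt, hGr]
    by_cases h1 : t < ξ <;> by_cases h2 : r < ξ <;> simp [h1, h2]
  rw [hrepr]
  -- pointwise bound
  set F : ℝ → ℝ := fun ξ => (2 * ‖X‖^2 / c^2) * (Gt ξ - Gr ξ)^2
    + (2 * ‖X - Y‖^2 / c^2) * (Gr ξ)^2 with hF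
  have hpt : ∀ ξ : ℝ, ‖(Gt ξ / c) • X - (Gr ξ / c) • Y‖ ^ 2 ≤ F ξ := by
    intro ξ
    set u := Gt ξ
    set v := Gr ξ
    have hv : 0 ≤ v := hGrnn ξ
    have hdecomp : (u/c) • X - (v/c) • Y = ((u-v)/c) • X + (v/c) • (X - Y) := by module
    rw [hdecomp]
    set A := ((u-v)/c) • X
    set B := (v/c) • (X - Y)
    have h1 : ‖A‖ = |u-v|/c * ‖X‖ := by
      rw [norm_smul, Real.norm_eq_abs, abs_div, abs_of_pos hc]
    have h2 : ‖B‖ = v/c * ‖X - Y‖ := by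
      rw [norm_smul, Real.norm_eq_abs, abs_div, abs_of_pos hc, abs_of_nonneg hv]
    have h4 : ‖A + B‖ ≤ |u-v|/c * ‖X‖ + v/c * ‖X - Y‖ := by
      rw [← h1, ← h2]; exact norm_add_le _ _
    have h5 : ‖A + B‖^2 ≤ (|u-v|/c * ‖X‖ + v/c * ‖X - Y‖)^2 :=
      pow_le_pow_left₀ (norm_nonneg _) h4 2
    have ha : (|u-v|/c * ‖X‖)^2 = (u-v)^2 * ‖X‖^2 / c^2 := by
      rw [mul_pow, div_pow, sq_abs]; ring
    have hb : (v/c * ‖X - Y‖)^2 = v^2 * ‖X - Y‖^2 / c^2 := by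
      rw [mul_pow, div_pow]; ring
    have habnn1 : 0 ≤ |u-v|/c * ‖X‖ := by positivity
    have habnn2 : 0 ≤ v/c * ‖X - Y‖ := by positivity
    have h6 : (|u-v|/c * ‖X‖ + v/c * ‖X - Y‖)^2
        ≤ 2 * (|u-v|/c * ‖X‖)^2 + 2 * (v/c * ‖X - Y‖)^2 := by
      nlinarith [sq_nonneg (|u-v|/c * ‖X‖ - v/c * ‖X - Y‖)]
    rw [hF]
    dsimp only
    rw [ha, hb] at h6
    refine h5.trans (h6.trans ?_)
    ring_nf
    nlinarith [sq_nonneg (u - v), sq_nonneg v]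
  -- integrability of F
  have hKdiff := kernel_diff α T r t hα1 hα2 hr0 hrt htT
  have hKsq := kernel_sq α T r hα1 hα2 hr0 (hrt.trans htT)
  have hFint : IntegrableOn F (Set.Ioo 0 T) :=
    (hKdiff.1.const_mul _).add (hKsq.1.const_mul _)
  -- integrability of LHS
  have hmeas : Measurable fun ξ : ℝ => ‖(Gt ξ / c) • X - (Gr ξ / c) • Y‖ ^ 2 := by
    have h1 : Measurable fun ξ : ℝ => (Gt ξ / c) • X - (Gr ξ / c) • Y :=
      (((G_meas α t).div_const c).smul_const X).sub (((G_meas α r).div_const c).smul_const Y)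
    exact h1.norm.pow_const 2
  have hLint : IntegrableOn (fun ξ : ℝ => ‖(Gt ξ / c) • X - (Gr ξ / c) • Y‖ ^ 2)
      (Set.Ioo 0 T) := by
    refine Integrable.mono' hFint hmeas.aestronglyMeasurable.restrict ?_
    exact Filter.Eventually.of_forall fun ξ => by
      rw [Real.norm_eq_abs, abs_of_nonneg (by positivity)]; exact hpt ξ
  -- chain
  calc ∫ ξ in Set.Ioo (0:ℝ) T, ‖(Gt ξ / c) • X - (Gr ξ / c) • Y‖ ^ 2
      ≤ ∫ ξ in Set.Ioo (0:ℝ) T, F ξ :=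
        setIntegral_mono_on hLint hFint measurableSet_Ioo fun ξ _ => hpt ξ
    _ = (2 * ‖X‖^2 / c^2) * (∫ ξ in Set.Ioo (0:ℝ) T, (Gt ξ - Gr ξ)^2)
        + (2 * ‖X - Y‖^2 / c^2) * (∫ ξ in Set.Ioo (0:ℝ) T, (Gr ξ)^2) := by
        rw [hF, integral_add (hKdiff.1.const_mul _) (hKsq.1.const_mul _),
          integral_const_mul, integral_const_mul]
    _ ≤ (2 * ‖X‖^2 / c^2) * (2 / (2*α-1) * (t-r)^(2*α-1))
        + (2 * ‖X - Y‖^2 / c^2) * (T^(2*α-1) / (2*α-1)) := by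
        refine add_le_add ?_ ?_
        · exact mul_le_mul_of_nonneg_left hKdiff.2 (by positivity)
        · exact mul_le_mul_of_nonneg_left hKsq.2 (by positivity)

/-- For the affine drift, with `b̃(t) = A(t)w(t) + b(t)` and
`B(w)(t,ξ) = 1_{ξ>t} k₂(ξ−t) b̃(t)`, `k₂(u) = u^(α−1)/Γ(α)`, there is a constant `L > 0` such
that `∫₀^T |B(w)(t,ξ) − B(w)(r,ξ)|² dξ ≤ L(|t−r|^(2α−1) + |b̃(t) − b̃(r)|²)` for all
`r, t ∈ [0,T]`; consequently `t ↦ B(w)(t,·)` is continuous from `[0,T]` to `L²((0,T);ℝ^d)`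
(continuity expressed through the squared `L²`-distance tending to `0`). -/
theorem statement17 (d : ℕ) (hd : 1 ≤ d) (T α : ℝ) (hT : 0 < T)
    (hα1 : 1 / 2 < α) (hα2 : α < 1)
    (A : ℝ → EuclideanSpace ℝ (Fin d) →L[ℝ] EuclideanSpace ℝ (Fin d))
    (hA : ContinuousOn A (Set.Icc 0 T))
    (b : ℝ → EuclideanSpace ℝ (Fin d)) (hb : ContinuousOn b (Set.Icc 0 T))
    (w : ℝ → EuclideanSpace ℝ (Fin d)) (hw : ContinuousOn w (Set.Icc 0 T)) :
    let bt : ℝ → EuclideanSpace ℝ (Fin d) := fun t => A t (w t) + b t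
    (∃ L : ℝ, 0 < L ∧
      ∀ r ∈ Set.Icc (0 : ℝ) T, ∀ t ∈ Set.Icc (0 : ℝ) T,
        (∫ ξ in Set.Ioo (0 : ℝ) T,
            ‖(if t < ξ then ((ξ - t) ^ (α - 1) / Real.Gamma α) • bt t else 0) -
              (if r < ξ then ((ξ - r) ^ (α - 1) / Real.Gamma α) • bt r else 0)‖ ^ 2) ≤
          L * (|t - r| ^ (2 * α - 1) + ‖bt t - bt r‖ ^ 2)) ∧
    (∀ t₀ ∈ Set.Icc (0 : ℝ) T,
      Filter.Tendsto
        (fun t : ℝ => ∫ ξ in Set.Ioo (0 : ℝ) T,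
          ‖(if t < ξ then ((ξ - t) ^ (α - 1) / Real.Gamma α) • bt t else 0) -
            (if t₀ < ξ then ((ξ - t₀) ^ (α - 1) / Real.Gamma α) • bt t₀ else 0)‖ ^ 2)
        (nhdsWithin t₀ (Set.Icc 0 T)) (nhds 0)) := by
  intro bt
  have hc : 0 < Real.Gamma α := Real.Gamma_pos_of_pos (by linarith)
  have hβ : (0:ℝ) < 2*α-1 := by linarith
  have hbt : ContinuousOn bt (Set.Icc 0 T) := (hA.clm_apply hw).add hb
  obtain ⟨M, hM⟩ := isCompact_Icc.exists_bound_of_continuousOn hbt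
  have hM0 : 0 ≤ M := (norm_nonneg _).trans (hM 0 ⟨le_refl 0, hT.le⟩)
  have hTβ : (0:ℝ) ≤ T^(2*α-1) := Real.rpow_nonneg hT.le _
  set c := Real.Gamma α with hcdef
  set L : ℝ := (4*(M+1)^2 + 2*T^(2*α-1) + 1)/(c^2*(2*α-1)) with hLdef
  have hLpos : 0 < L := by
    apply div_pos
    · nlinarith [sq_nonneg (M+1)]
    · positivity
  have hcne : c ≠ 0 := ne_of_gt hc
  have hβne : (2*α-1) ≠ 0 := ne_of_gt hβ
  -- the key asymmetric estimate
  have key : ∀ r ∈ Set.Icc (0:ℝ) T, ∀ t ∈ Set.Icc (0:ℝ) T, r ≤ t →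
      (∫ ξ in Set.Ioo (0 : ℝ) T,
          ‖(if t < ξ then ((ξ - t) ^ (α - 1) / c) • bt t else 0) -
            (if r < ξ then ((ξ - r) ^ (α - 1) / c) • bt r else 0)‖ ^ 2) ≤
        L * (|t - r| ^ (2 * α - 1) + ‖bt t - bt r‖ ^ 2) := by
    intro r hr t ht hrt
    have hest := key_est α T hα1 hα2 c hc (bt t) (bt r) r t hr.1 hrt ht.2
    refine hest.trans ?_
    have habs : |t - r| = t - r := abs_of_nonneg (by linarith)
    rw [habs]
    have hpow : (0:ℝ) ≤ (t-r)^(2*α-1) := Real.rpow_nonneg (by linarith) _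
    have hXM : ‖bt t‖ ≤ M := hM t ht
    have e1 : (2*‖bt t‖^2/c^2) * (2/(2*α-1) * (t-r)^(2*α-1))
        = ((4*‖bt t‖^2)/(c^2*(2*α-1))) * (t-r)^(2*α-1) := by
      field_simp; ring
    have e2 : (2*‖bt t - bt r‖^2/c^2) * (T^(2*α-1)/(2*α-1))
        = ((2*T^(2*α-1))/(c^2*(2*α-1))) * ‖bt t - bt r‖^2 := by
      field_simp
    have hden : (0:ℝ) < c^2*(2*α-1) := by positivity
    have c1 : (4*‖bt t‖^2)/(c^2*(2*α-1)) ≤ L := by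
      rw [hLdef, div_le_div_iff_of_pos_right hden]
      nlinarith [norm_nonneg (bt t)]
    have c2 : (2*T^(2*α-1))/(c^2*(2*α-1)) ≤ L := by
      rw [hLdef, div_le_div_iff_of_pos_right hden]
      nlinarith [sq_nonneg (M+1)]
    rw [e1, e2, mul_add]
    exact add_le_add (mul_le_mul_of_nonneg_right c1 hpow)
      (mul_le_mul_of_nonneg_right c2 (sq_nonneg _))
  have keyfull : ∀ r ∈ Set.Icc (0:ℝ) T, ∀ t ∈ Set.Icc (0:ℝ) T,
      (∫ ξ in Set.Ioo (0 : ℝ) T,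
          ‖(if t < ξ then ((ξ - t) ^ (α - 1) / c) • bt t else 0) -
            (if r < ξ then ((ξ - r) ^ (α - 1) / c) • bt r else 0)‖ ^ 2) ≤
        L * (|t - r| ^ (2 * α - 1) + ‖bt t - bt r‖ ^ 2) := by
    intro r hr t ht
    rcases le_total r t with h | h
    · exact key r hr t ht h
    · have hI : (∫ ξ in Set.Ioo (0 : ℝ) T,
          ‖(if t < ξ then ((ξ - t) ^ (α - 1) / c) • bt t else 0) -
            (if r < ξ then ((ξ - r) ^ (α - 1) / c) • bt r else 0)‖ ^ 2)
          = ∫ ξ in Set.Ioo (0 : ℝ) T,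
          ‖(if r < ξ then ((ξ - r) ^ (α - 1) / c) • bt r else 0) -
            (if t < ξ then ((ξ - t) ^ (α - 1) / c) • bt t else 0)‖ ^ 2 := by
        congr 1
        funext ξ
        rw [norm_sub_rev]
      rw [hI, abs_sub_comm, norm_sub_rev]
      exact key t ht r hr h
  refine ⟨⟨L, hLpos, keyfull⟩, ?_⟩
  -- continuity
  intro t₀ ht₀
  have hbtc : Filter.Tendsto bt (nhdsWithin t₀ (Set.Icc 0 T)) (nhds (bt t₀)) := hbt t₀ ht₀
  have h1 : Filter.Tendsto (fun t => ‖bt t - bt t₀‖^2)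
      (nhdsWithin t₀ (Set.Icc 0 T)) (nhds 0) := by
    have h0 : Filter.Tendsto (fun t => bt t - bt t₀) (nhdsWithin t₀ (Set.Icc 0 T))
        (nhds (bt t₀ - bt t₀)) := hbtc.sub tendsto_const_nhds
    have h0' := (h0.norm).pow 2
    simpa using h0'
  have h2 : Filter.Tendsto (fun t : ℝ => |t - t₀|^(2*α-1))
      (nhdsWithin t₀ (Set.Icc 0 T)) (nhds 0) := by
    have ha : Filter.Tendsto (fun t : ℝ => |t - t₀|)
        (nhdsWithin t₀ (Set.Icc 0 T)) (nhds 0) := by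
      have hcont : Continuous fun t : ℝ => |t - t₀| := (continuous_id.sub continuous_const).abs
      have h0 := (hcont.tendsto t₀).mono_left
        (nhdsWithin_le_nhds (s := Set.Icc (0:ℝ) T))
      simpa using h0
    have hb2 : Filter.Tendsto (fun x : ℝ => x^(2*α-1)) (nhds 0) (nhds 0) := by
      have hca := (Real.continuousAt_rpow_const 0 (2*α-1) (Or.inr hβ.le)).tendsto
      simpa [Real.zero_rpow hβne] using hca
    exact hb2.comp ha
  have hup : Filter.Tendsto (fun t => L * (|t-t₀|^(2*α-1) + ‖bt t - bt t₀‖^2))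
      (nhdsWithin t₀ (Set.Icc 0 T)) (nhds 0) := by
    have h0 := (h2.add h1).const_mul L
    simpa using h0
  refine squeeze_zero' ?_ ?_ hup
  · exact Filter.Eventually.of_forall fun t => integral_nonneg fun ξ => by positivity
  · filter_upwards [self_mem_nhdsWithin] with t ht
    exact keyfull t₀ ht₀ t ht
end
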